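/- arXiv:2007.09636 — 6 statements merged into one kernel-verified Lean document; each statement's English description precedes it below -/
import Mathlib

section
/- (Lemma 3.1) Suppose Assumptions 2.1 and 3.1 hold. Then there exists τ ∈ (0, π/2) such that arg( d(r)/d̃(r) ) ∈ [0, τ] for all r > r₁*. -/
open Filter Set MeasureTheory

noncomputable def dtil (αt : ℝ → ℝ) (r : ℝ) : ℂ := 1 + Complex.I * (αt r : ℂ)

noncomputable def afun (r₁ : ℝ) (αt : ℝ → ℝ) (r : ℝ) : ℝ :=
  if r₁ < r then r * deriv αt r + αt r else 0

noncomputable def dfun (r₁ : ℝ) (αt : ℝ → ℝ) (r : ℝ) : ℂ :=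
  1 + Complex.I * (afun r₁ αt r : ℂ)

/-- Assumption 2.1: the profile function `αt` vanishes on `[0, r₁]`, is continuous,
positive beyond `r₁`, non-decreasing, and twice continuously differentiable on `(r₁, ∞)`
with continuous extensions of itself and its first two derivatives to `[r₁, ∞)`. -/
structure Assumption21 (r₁ : ℝ) (αt : ℝ → ℝ) : Prop where
  r₁_pos : 0 < r₁
  nonneg : ∀ r, 0 ≤ r → 0 ≤ αt r
  eq_zero : ∀ r, 0 ≤ r → r ≤ r₁ → αt r = 0
  cont : ContinuousOn αt (Set.Ici 0)
  pos : ∀ r, r₁ < r → 0 < αt r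
  mono : MonotoneOn αt (Set.Ici 0)
  smooth : ContDiffOn ℝ 2 αt (Set.Ioi r₁)
  ext0 : ∃ L : ℝ, Tendsto αt (nhdsWithin r₁ (Set.Ioi r₁)) (nhds L)
  ext1 : ∃ L : ℝ, Tendsto (deriv αt) (nhdsWithin r₁ (Set.Ioi r₁)) (nhds L)
  ext2 : ∃ L : ℝ, Tendsto (deriv (deriv αt)) (nhdsWithin r₁ (Set.Ioi r₁)) (nhds L)

/-- Assumption 3.1: (a) `d̃·|d|/(|d̃|·d) → 1` as `r → ∞`, and
(b) the derivatives of `d̃/|d̃|` and `d/|d|` tend to `0` as `r → ∞`. -/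
structure Assumption31 (r₁ : ℝ) (αt : ℝ → ℝ) : Prop where
  parta : Tendsto (fun r => dtil αt r * (‖dfun r₁ αt r‖ : ℂ) /
      ((‖dtil αt r‖ : ℂ) * dfun r₁ αt r)) atTop (nhds 1)
  partb1 : Tendsto (deriv (fun r => dtil αt r / (‖dtil αt r‖ : ℂ))) atTop (nhds 0)
  partb2 : Tendsto (deriv (fun r => dfun r₁ αt r / (‖dfun r₁ αt r‖ : ℂ))) atTop (nhds 0)

lemma arg_eq_arctan'' {z : ℂ} (hz : 0 < z.re) : z.arg = Real.arctan (z.im / z.re) := by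
  have habs : |z.arg| < Real.pi/2 := Complex.abs_arg_lt_pi_div_two_iff.mpr (Or.inl hz)
  rw [abs_lt] at habs
  rw [← Complex.tan_arg z, Real.arctan_tan habs.1 habs.2]

lemma arg_ratio (a b : ℝ) (ha : 0 ≤ a) (hb : 0 ≤ b) :
    ((1 + Complex.I * (a:ℂ)) / (1 + Complex.I * (b:ℂ))).arg
      = Real.arctan ((a - b) / (1 + a * b)) := by
  have hb2 : (0:ℝ) < 1 + b^2 := by positivity
  have hab : (0:ℝ) < 1 + a*b := by positivity
  have hre : ((1 + Complex.I * (a:ℂ)) / (1 + Complex.I * (b:ℂ))).re = (1 + a*b)/(1 + b^2) := by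
    simp [Complex.div_re, Complex.normSq_apply]
    ring_nf
  have him : ((1 + Complex.I * (a:ℂ)) / (1 + Complex.I * (b:ℂ))).im = (a - b)/(1 + b^2) := by
    simp [Complex.div_im, Complex.normSq_apply]
    ring_nf
  have hrepos : 0 < ((1 + Complex.I * (a:ℂ)) / (1 + Complex.I * (b:ℂ))).re := by
    rw [hre]; positivity
  rw [arg_eq_arctan'' hrepos, hre, him]
  congr 1
  field_simp

lemma arg_ratio_neg (a b : ℝ) (ha : 0 ≤ a) (hb : 0 ≤ b) :
    ((1 + Complex.I * (b:ℂ)) * (‖1 + Complex.I * (a:ℂ)‖ : ℂ) /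
      ((‖1 + Complex.I * (b:ℂ)‖ : ℂ) * (1 + Complex.I * (a:ℂ)))).arg
      = -((1 + Complex.I * (a:ℂ)) / (1 + Complex.I * (b:ℂ))).arg := by
  set d : ℂ := 1 + Complex.I * a with hd'
  set dt : ℂ := 1 + Complex.I * b with hdt'
  have hd : d ≠ 0 := by
    intro h
    have : (d : ℂ).re = 0 := by rw [h]; simp
    simp [hd'] at this
  have hdt : dt ≠ 0 := by
    intro h
    have : (dt : ℂ).re = 0 := by rw [h]; simp
    simp [hdt'] at this
  have habsd : (0:ℝ) < ‖d‖ := norm_pos_iff.mpr hd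
  have habsdt : (0:ℝ) < ‖dt‖ := norm_pos_iff.mpr hdt
  have key : dt * (‖d‖ : ℂ) / ((‖dt‖ : ℂ) * d)
      = ((‖d‖ / ‖dt‖ : ℝ) : ℂ) * (d / dt)⁻¹ := by
    push_cast
    field_simp
  rw [key, Complex.arg_real_mul _ (by positivity), Complex.arg_inv]
  have hargne : (d / dt).arg ≠ Real.pi := by
    have hre : (0:ℝ) < (d/dt).re := by
      have : (d/dt).re = (1 + a*b)/(1+b^2) := by
        simp [hd', hdt', Complex.div_re, Complex.normSq_apply]; ring_nf
      rw [this]; positivity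
    have halt := Complex.abs_arg_lt_pi_div_two_iff.mpr (Or.inl hre)
    intro h; rw [h] at halt
    rw [abs_of_pos Real.pi_pos] at halt; linarith [Real.pi_pos]
  simp [hargne]

/-- Lemma 3.1: under Assumptions 2.1 and 3.1 there exists `τ ∈ (0, π/2)` such that
`arg(d(r)/d̃(r)) ∈ [0, τ]` for all `r > r₁*`. -/
theorem stmt0 (r₁ : ℝ) (αt : ℝ → ℝ)
    (h21 : Assumption21 r₁ αt) (h31 : Assumption31 r₁ αt) :
    ∃ τ ∈ Set.Ioo 0 (Real.pi / 2), ∀ r, r₁ < r →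
      (dfun r₁ αt r / dtil αt r).arg ∈ Set.Icc 0 τ := by
  obtain ⟨L₁, hL₁⟩ := h21.ext1
  have hr₁0 := h21.r₁_pos
  have hpi := Real.pi_pos
  -- derivative is nonnegative beyond r₁
  have hderiv : ∀ r, r₁ < r → 0 ≤ deriv αt r := by
    intro r hr
    have hdiff : DifferentiableAt ℝ αt r :=
      ((h21.smooth.differentiableOn (by norm_num)).differentiableAt (Ioi_mem_nhds hr))
    have hd := hdiff.hasDerivAt
    rw [hasDerivAt_iff_tendsto_slope] at hd
    have hd' : Tendsto (slope αt r) (nhdsWithin r (Set.Ioi r)) (nhds (deriv αt r)) :=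
      hd.mono_left (nhdsWithin_mono r (fun x hx => ne_of_gt hx))
    refine ge_of_tendsto hd' ?_
    filter_upwards [self_mem_nhdsWithin] with y hy
    have hr0 : (0:ℝ) ≤ r := (hr₁0.trans hr).le
    have hmono : αt r ≤ αt y := h21.mono hr0 (hr0.trans (le_of_lt hy)) (le_of_lt hy)
    rw [slope_def_field]
    exact div_nonneg (by linarith) (by linarith [hy.out])
  have hbnn : ∀ r, r₁ < r → 0 ≤ αt r := fun r hr => h21.nonneg r (hr₁0.trans hr).le
  have hann : ∀ r, r₁ < r → 0 ≤ afun r₁ αt r := by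
    intro r hr
    rw [afun, if_pos hr]
    have h1 := hderiv r hr
    have h2 := hbnn r hr
    have h3 : (0:ℝ) < r := hr₁0.trans hr
    nlinarith
  -- the argument formula
  have harg : ∀ r, r₁ < r → (dfun r₁ αt r / dtil αt r).arg
      = Real.arctan ((afun r₁ αt r - αt r) / (1 + afun r₁ αt r * αt r)) := by
    intro r hr
    exact arg_ratio _ _ (hann r hr) (hbnn r hr)
  -- the argument tends to 0 at infinity
  have hargtop : Tendsto (fun r => (dfun r₁ αt r / dtil αt r).arg) atTop (nhds 0) := by
    have h1 : ContinuousAt Complex.arg 1 :=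
      Complex.continuousAt_arg (by simp [Complex.mem_slitPlane_iff])
    have h2 : Tendsto (fun r => (dtil αt r * (‖dfun r₁ αt r‖ : ℂ) /
        ((‖dtil αt r‖ : ℂ) * dfun r₁ αt r)).arg) atTop (nhds 0) := by
      have := h1.tendsto.comp h31.parta
      simpa [Function.comp_def] using this
    have hev : (fun r => (dfun r₁ αt r / dtil αt r).arg)
        =ᶠ[atTop] (fun r => -(dtil αt r * (‖dfun r₁ αt r‖ : ℂ) /
          ((‖dtil αt r‖ : ℂ) * dfun r₁ αt r)).arg) := by
      filter_upwards [eventually_gt_atTop r₁] with r hr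
      have := arg_ratio_neg (afun r₁ αt r) (αt r) (hann r hr) (hbnn r hr)
      simp only [dfun, dtil]
      rw [this, neg_neg]
    have h3 := h2.neg
    rw [neg_zero] at h3
    exact h3.congr' hev.symm
  have hquarter : (0:ℝ) < Real.pi/4 := by linarith
  have hev4 : ∀ᶠ r in atTop, (dfun r₁ αt r / dtil αt r).arg < Real.pi/4 :=
    hargtop.eventually_lt_const hquarter
  obtain ⟨R₀, hR₀⟩ := eventually_atTop.mp hev4
  set R : ℝ := max R₀ (r₁ + 1) with hRdef
  have hR : r₁ < R := lt_of_lt_of_le (by linarith) (le_max_right _ _)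
  -- continuous extension near r₁
  set D : ℝ → ℝ := fun r => if r ≤ r₁ then L₁ else deriv αt r with hD
  have hDcont : ContinuousOn D (Set.Icc r₁ R) := by
    have hderivcont : ContinuousOn (deriv αt) (Set.Ioi r₁) :=
      h21.smooth.continuousOn_deriv_of_isOpen isOpen_Ioi (by norm_num)
    intro x hx
    rcases eq_or_lt_of_le hx.1 with heq | hlt
    · obtain rfl := heq
      have hIci : ContinuousWithinAt D (Set.Ici r₁) r₁ := by
        have hins : Set.Ici r₁ = insert r₁ (Set.Ioi r₁) := by rw [Set.Ioi_insert]
        rw [hins, ContinuousWithinAt, nhdsWithin_insert, tendsto_sup]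
        have hDr : D r₁ = L₁ := by simp [hD]
        rw [hDr]
        constructor
        · rw [← hDr]; exact tendsto_pure_nhds D r₁
        · refine hL₁.congr' ?_
          filter_upwards [self_mem_nhdsWithin] with y hy
          simp [hD, not_le.mpr hy.out]
      exact hIci.mono Set.Icc_subset_Ici_self
    · have hca : ContinuousAt D x := by
        have h1 : ContinuousAt (deriv αt) x := hderivcont.continuousAt (Ioi_mem_nhds hlt)
        apply h1.congr
        filter_upwards [Ioi_mem_nhds hlt] with y hy
        simp [hD, not_le.mpr hy.out]
      exact hca.continuousWithinAt
  have hDnn : ∀ x ∈ Set.Icc r₁ R, 0 ≤ D x := by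
    intro x hx
    by_cases h : x ≤ r₁
    · have hL₁nn : 0 ≤ L₁ := by
        refine ge_of_tendsto hL₁ ?_
        filter_upwards [self_mem_nhdsWithin] with y hy
        exact hderiv y hy
      simp [hD, h, hL₁nn]
    · simp only [hD, if_neg h]
      exact hderiv x (not_le.mp h)
  have hαtcont : ContinuousOn αt (Set.Icc r₁ R) :=
    h21.cont.mono (fun x hx => le_trans hr₁0.le hx.1)
  have hαtnn : ∀ x ∈ Set.Icc r₁ R, 0 ≤ αt x := fun x hx =>
    h21.nonneg x (hr₁0.le.trans hx.1)
  set F : ℝ → ℝ := fun r => Real.arctan ((r * D r) / (1 + (r * D r + αt r) * αt r)) with hF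
  have hdenpos : ∀ x ∈ Set.Icc r₁ R, (0:ℝ) < 1 + (x * D x + αt x) * αt x := by
    intro x hx
    have h1 := hDnn x hx
    have h2 := hαtnn x hx
    have h3 : (0:ℝ) < x := lt_of_lt_of_le hr₁0 hx.1
    have h4 := mul_nonneg (add_nonneg (mul_nonneg h3.le h1) h2) h2
    linarith
  have hFcont : ContinuousOn F (Set.Icc r₁ R) := by
    apply Real.continuous_arctan.comp_continuousOn
    apply ContinuousOn.div
    · exact continuousOn_id.mul hDcont
    · exact continuousOn_const.add (((continuousOn_id.mul hDcont).add hαtcont).mul hαtcont)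
    · intro x hx
      exact ne_of_gt (hdenpos x hx)
  obtain ⟨x₀, hx₀mem, hx₀max⟩ :=
    isCompact_Icc.exists_isMaxOn ⟨r₁, left_mem_Icc.mpr hR.le⟩ hFcont
  set τ : ℝ := max (F x₀) (Real.pi/4) with hτdef
  have hτpos : 0 < τ := lt_of_lt_of_le hquarter (le_max_right _ _)
  have hτlt : τ < Real.pi/2 := by
    apply max_lt
    · exact Real.arctan_lt_pi_div_two _
    · linarith
  refine ⟨τ, ⟨hτpos, hτlt⟩, ?_⟩
  intro r hr
  constructor
  · rw [harg r hr]
    rw [← Real.arctan_zero]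
    apply Real.arctan_strictMono.monotone
    apply div_nonneg
    · rw [afun, if_pos hr]
      have h1 := hderiv r hr
      have h3 : (0:ℝ) < r := hr₁0.trans hr
      nlinarith
    · have h1 := hann r hr
      have h2 := hbnn r hr
      nlinarith
  · rcases le_or_gt r R with hle | hgt
    · have hrmem : r ∈ Set.Icc r₁ R := ⟨hr.le, hle⟩
      have hDr : D r = deriv αt r := by simp [hD, not_le.mpr hr]
      have haf : afun r₁ αt r = r * D r + αt r := by rw [afun, if_pos hr, hDr]
      have hargF : (dfun r₁ αt r / dtil αt r).arg = F r := by
        rw [harg r hr, haf, hF]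
        congr 1
        ring_nf
      rw [hargF]
      exact le_trans (hx₀max hrmem) (le_max_left _ _)
    · have hrR₀ : R₀ ≤ r := le_trans (le_max_left _ _) hgt.le
      exact le_trans (hR₀ r hrR₀).le (le_max_right _ _)
end

section
/- (Lemma 3.2) Let Ω ⊆ ℝ³ be measurable and let B_n denote the open ball of radius n centered at the origin. Let η₁ : Ω → ℂ be measurable with η₁ essentially bounded on Ω ∩ B_n for every n ∈ ℕ. Let Y be a complex Hilbert space together with a linear map ι : Y → L²(Ω) such that (i) there is a constant C > 0 with ‖η₁·ι(u)‖_{L²(Ω)} ≤ C‖u‖_Y for all u ∈ Y, and (ii) for each n ∈ ℕ the restriction operator K_n : Y → L²(Ω ∩ B_n), u ↦ (ι u)|_{Ω ∩ B_n}, is a compact operator. Let η₂ ∈ L^∞(Ω) satisfy lim_{r→∞} ‖η₂‖_{L^∞(Ω \ B_r)} = 0. Then the multiplication-and-embedding operator K : Y → L²(Ω), u ↦ η₁·η₂·ι(u), is compact. -/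
open Filter MeasureTheory Set
open scoped ENNReal

lemma eLpNorm_two_add_measure_le {α E : Type*} [MeasurableSpace α] [NormedAddCommGroup E]
    (f : α → E) (μ ν : Measure α) :
    eLpNorm f 2 (μ + ν) ≤ eLpNorm f 2 μ + eLpNorm f 2 ν := by
  have h2 : ((2 : ℝ≥0∞)).toReal = 2 := by norm_num
  simp_rw [eLpNorm_eq_lintegral_rpow_enorm_toReal (two_ne_zero) (ENNReal.ofNat_ne_top), h2,
    lintegral_add_measure]
  exact ENNReal.rpow_add_le_add_rpow _ _ (by norm_num) (by norm_num)

set_option maxHeartbeats 1000000 in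
/-- Lemma 3.2: let `Ω ⊆ ℝ³` be measurable, `η₁` measurable and essentially bounded on each
`Ω ∩ Bₙ`, `Y` a Hilbert space with a linear map `ι : Y → L²(Ω)` such that
`‖η₁·ι(u)‖_{L²(Ω)} ≤ C‖u‖` and such that each restriction `Kₙ : Y → L²(Ω ∩ Bₙ)` (given as a
linear map agreeing a.e. with `ι`) is compact, and `η₂ ∈ L^∞(Ω)` with
`‖η₂‖_{L^∞(Ω \ B_r)} → 0` as `r → ∞`. Then the multiplication-and-embedding operator
`K : Y → L²(Ω)`, `u ↦ η₁·η₂·ι(u)`, is compact. -/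
theorem stmt4
    (Ω : Set (EuclideanSpace ℝ (Fin 3))) (hΩ : MeasurableSet Ω)
    (η₁ η₂ : EuclideanSpace ℝ (Fin 3) → ℂ)
    (hη₁meas : Measurable η₁)
    (hη₁loc : ∀ n : ℕ,
      eLpNorm η₁ ⊤ (volume.restrict (Ω ∩ Metric.ball (0 : EuclideanSpace ℝ (Fin 3)) n)) < ⊤)
    (hη₂meas : Measurable η₂)
    (hη₂bdd : eLpNorm η₂ ⊤ (volume.restrict Ω) < ⊤)
    (hη₂lim : Tendsto
      (fun r : ℝ =>
        eLpNorm η₂ ⊤ (volume.restrict (Ω \ Metric.ball (0 : EuclideanSpace ℝ (Fin 3)) r)))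
      atTop (nhds 0))
    (Y : Type*) [NormedAddCommGroup Y] [InnerProductSpace ℂ Y] [CompleteSpace Y]
    (ι : Y →ₗ[ℂ] Lp ℂ 2 (volume.restrict Ω))
    (C : ℝ) (hC : 0 < C)
    (hbound : ∀ u : Y,
      eLpNorm (fun x => η₁ x * (ι u : EuclideanSpace ℝ (Fin 3) → ℂ) x) 2 (volume.restrict Ω)
        ≤ ENNReal.ofReal (C * ‖u‖))
    (Kres : ∀ n : ℕ,
      Y →ₗ[ℂ] Lp ℂ 2 (volume.restrict (Ω ∩ Metric.ball (0 : EuclideanSpace ℝ (Fin 3)) n)))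
    (hKres : ∀ (n : ℕ) (u : Y),
      (Kres n u : EuclideanSpace ℝ (Fin 3) → ℂ)
        =ᵐ[volume.restrict (Ω ∩ Metric.ball (0 : EuclideanSpace ℝ (Fin 3)) n)]
          (ι u : EuclideanSpace ℝ (Fin 3) → ℂ))
    (hKcomp : ∀ n : ℕ, IsCompactOperator (Kres n))
    (K : Y →ₗ[ℂ] Lp ℂ 2 (volume.restrict Ω))
    (hK : ∀ u : Y,
      (K u : EuclideanSpace ℝ (Fin 3) → ℂ) =ᵐ[volume.restrict Ω]
        fun x => η₁ x * (η₂ x * (ι u : EuclideanSpace ℝ (Fin 3) → ℂ) x)) :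
    IsCompactOperator K := by
  classical
  rw [isCompactOperator_iff_isCompact_closure_image_closedBall K zero_lt_one]
  refine TotallyBounded.isCompact_of_isClosed (TotallyBounded.closure ?_) isClosed_closure
  rw [Metric.totallyBounded_iff]
  intro ε hε
  -- choose the cutoff radius n
  have hδpos : (0 : ℝ≥0∞) < ENNReal.ofReal (ε / (8 * (C + 1))) :=
    ENNReal.ofReal_pos.2 (by positivity)
  obtain ⟨r₀, hr₀⟩ := eventually_atTop.1 (hη₂lim.eventually_lt_const hδpos)
  set n : ℕ := ⌈r₀⌉₊ with hn
  have hout : eLpNorm η₂ ⊤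
      (volume.restrict (Ω \ Metric.ball (0 : EuclideanSpace ℝ (Fin 3)) (n : ℝ)))
      < ENNReal.ofReal (ε / (8 * (C + 1))) := hr₀ (n : ℝ) (Nat.le_ceil r₀)
  have hμsplit : volume.restrict (Ω ∩ Metric.ball (0 : EuclideanSpace ℝ (Fin 3)) (n : ℝ))
      + volume.restrict (Ω \ Metric.ball (0 : EuclideanSpace ℝ (Fin 3)) (n : ℝ))
      = volume.restrict Ω :=
    Measure.restrict_inter_add_diff Ω Metric.isOpen_ball.measurableSet
  have hμin_le : volume.restrict (Ω ∩ Metric.ball (0 : EuclideanSpace ℝ (Fin 3)) (n : ℝ))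
      ≤ volume.restrict Ω := Measure.restrict_mono inter_subset_left le_rfl
  have hμout_le : volume.restrict (Ω \ Metric.ball (0 : EuclideanSpace ℝ (Fin 3)) (n : ℝ))
      ≤ volume.restrict Ω := Measure.restrict_mono diff_subset le_rfl
  have hM1 : eLpNorm η₁ ⊤
      (volume.restrict (Ω ∩ Metric.ball (0 : EuclideanSpace ℝ (Fin 3)) (n : ℝ))) ≠ ⊤ :=
    (hη₁loc n).ne
  have hMprod_ne :
      eLpNorm η₁ ⊤ (volume.restrict (Ω ∩ Metric.ball (0 : EuclideanSpace ℝ (Fin 3)) (n : ℝ)))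
        * eLpNorm η₂ ⊤ (volume.restrict Ω) ≠ ⊤ := ENNReal.mul_ne_top hM1 hη₂bdd.ne
  set M : ℝ :=
    (eLpNorm η₁ ⊤ (volume.restrict (Ω ∩ Metric.ball (0 : EuclideanSpace ℝ (Fin 3)) (n : ℝ)))
      * eLpNorm η₂ ⊤ (volume.restrict Ω)).toReal with hM
  have hM0 : 0 ≤ M := ENNReal.toReal_nonneg
  set ε' : ℝ := ε / (4 * (M + 1)) with hε'def
  have hε' : 0 < ε' := by positivity
  -- a finite ε'-net of the image of Kres n
  have htb : TotallyBounded ((Kres n) '' Metric.closedBall 0 1) :=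
    ((hKcomp n).isCompact_closure_image_closedBall 1).totallyBounded.subset subset_closure
  obtain ⟨t, hts, htfin, htcover⟩ :=
    totallyBounded_iff_subset.1 htb _ (Metric.dist_mem_uniformity hε')
  have hchoice : ∀ y : Lp ℂ 2
      (volume.restrict (Ω ∩ Metric.ball (0 : EuclideanSpace ℝ (Fin 3)) (n : ℝ))),
      ∃ u : Y, ‖u‖ ≤ 1 ∧ (y ∈ t → Kres n u = y) := by
    intro y
    by_cases hy : y ∈ t
    · obtain ⟨u, hu, rfl⟩ := hts hy
      exact ⟨u, by simpa [Metric.mem_closedBall, dist_zero_right] using hu, fun _ => rfl⟩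
    · exact ⟨0, by simp, fun h => absurd h hy⟩
  choose g hg1 hg2 using hchoice
  refine ⟨(fun y => K (g y)) '' t, htfin.image _, ?_⟩
  rintro _ ⟨u, hu, rfl⟩
  have hu1 : ‖u‖ ≤ 1 := by simpa [Metric.mem_closedBall, dist_zero_right] using hu
  obtain ⟨y, hyt, hdy⟩ := mem_iUnion₂.1 (htcover (mem_image_of_mem _ hu))
  have hdy' : dist ((Kres n) u) y < ε' := hdy
  refine mem_iUnion₂.2 ⟨K (g y), mem_image_of_mem _ hyt, ?_⟩
  rw [Metric.mem_ball]
  have hv1 : ‖g y‖ ≤ 1 := hg1 y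
  have hKv : Kres n (g y) = y := hg2 y hyt
  set w : Y := u - g y with hw
  have hwnorm : ‖w‖ ≤ 2 := (norm_sub_le u (g y)).trans (by linarith)
  have hιw : AEStronglyMeasurable (ι w : EuclideanSpace ℝ (Fin 3) → ℂ) (volume.restrict Ω) :=
    Lp.aestronglyMeasurable (ι w)
  have hdist : dist (K u) (K (g y))
      = (eLpNorm (fun x => η₁ x * (η₂ x * (ι w : EuclideanSpace ℝ (Fin 3) → ℂ) x)) 2
          (volume.restrict Ω)).toReal := by
    rw [dist_eq_norm, ← map_sub, ← hw, MeasureTheory.Lp.norm_def, eLpNorm_congr_ae (hK w)]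
  rw [hdist]
  -- inside estimate
  have hin : eLpNorm (fun x => η₁ x * (η₂ x * (ι w : EuclideanSpace ℝ (Fin 3) → ℂ) x)) 2
      (volume.restrict (Ω ∩ Metric.ball (0 : EuclideanSpace ℝ (Fin 3)) (n : ℝ)))
      ≤ ENNReal.ofReal (ε / 4) := by
    have hstep1 := eLpNorm_le_eLpNorm_top_mul_eLpNorm 2 η₁
        ((hη₂meas.aestronglyMeasurable).mul (hιw.mono_measure hμin_le)) (· * ·) 1
        (Eventually.of_forall fun x => le_of_eq (by simp [nnnorm_mul]))
    rw [ENNReal.coe_one, one_mul] at hstep1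
    have hstep2 := eLpNorm_le_eLpNorm_top_mul_eLpNorm 2 η₂
        (hιw.mono_measure hμin_le) (· * ·) 1
        (Eventually.of_forall fun x => le_of_eq (by simp [nnnorm_mul]))
    rw [ENNReal.coe_one, one_mul] at hstep2
    have hKresw : eLpNorm (ι w : EuclideanSpace ℝ (Fin 3) → ℂ) 2
        (volume.restrict (Ω ∩ Metric.ball (0 : EuclideanSpace ℝ (Fin 3)) (n : ℝ)))
        ≤ ENNReal.ofReal ε' := by
      rw [← eLpNorm_congr_ae (hKres n w)]
      have h1 : eLpNorm ((Kres n w : Lp ℂ 2 _) : EuclideanSpace ℝ (Fin 3) → ℂ) 2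
          (volume.restrict (Ω ∩ Metric.ball (0 : EuclideanSpace ℝ (Fin 3)) (n : ℝ)))
          = ENNReal.ofReal ‖Kres n w‖ := by
        rw [MeasureTheory.Lp.norm_def,
          ENNReal.ofReal_toReal (MeasureTheory.Lp.eLpNorm_ne_top _)]
      rw [h1]
      refine ENNReal.ofReal_le_ofReal ?_
      have h2 : Kres n w = Kres n u - Kres n (g y) := map_sub (Kres n) u (g y)
      rw [h2, hKv, ← dist_eq_norm]
      exact hdy'.le
    calc
      eLpNorm (fun x => η₁ x * (η₂ x * (ι w : EuclideanSpace ℝ (Fin 3) → ℂ) x)) 2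
          (volume.restrict (Ω ∩ Metric.ball (0 : EuclideanSpace ℝ (Fin 3)) (n : ℝ)))
          ≤ eLpNorm η₁ ⊤
              (volume.restrict (Ω ∩ Metric.ball (0 : EuclideanSpace ℝ (Fin 3)) (n : ℝ))) *
            (eLpNorm η₂ ⊤
              (volume.restrict (Ω ∩ Metric.ball (0 : EuclideanSpace ℝ (Fin 3)) (n : ℝ))) *
             eLpNorm (ι w : EuclideanSpace ℝ (Fin 3) → ℂ) 2
              (volume.restrict (Ω ∩ Metric.ball (0 : EuclideanSpace ℝ (Fin 3)) (n : ℝ)))) :=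
        hstep1.trans (mul_le_mul_right hstep2 _)
      _ ≤ eLpNorm η₁ ⊤
            (volume.restrict (Ω ∩ Metric.ball (0 : EuclideanSpace ℝ (Fin 3)) (n : ℝ))) *
          (eLpNorm η₂ ⊤ (volume.restrict Ω) * ENNReal.ofReal ε') :=
        mul_le_mul_right (mul_le_mul' (eLpNorm_mono_measure _ hμin_le) hKresw) _
      _ = (eLpNorm η₁ ⊤
            (volume.restrict (Ω ∩ Metric.ball (0 : EuclideanSpace ℝ (Fin 3)) (n : ℝ))) *
           eLpNorm η₂ ⊤ (volume.restrict Ω)) * ENNReal.ofReal ε' := by ring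
      _ = ENNReal.ofReal (M * ε') := by
        rw [← ENNReal.ofReal_toReal hMprod_ne, ← hM, ← ENNReal.ofReal_mul hM0]
      _ ≤ ENNReal.ofReal (ε / 4) := by
        refine ENNReal.ofReal_le_ofReal ?_
        have hcalc : M * ε' = M * ε / (4 * (M + 1)) := by
          rw [hε'def, mul_div_assoc]
        rw [hcalc, div_le_div_iff₀ (by positivity) (by norm_num)]
        nlinarith
  -- outside estimate
  have hout2 : eLpNorm (fun x => η₁ x * (η₂ x * (ι w : EuclideanSpace ℝ (Fin 3) → ℂ) x)) 2
      (volume.restrict (Ω \ Metric.ball (0 : EuclideanSpace ℝ (Fin 3)) (n : ℝ)))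
      ≤ ENNReal.ofReal (ε / 4) := by
    have hswap : (fun x => η₁ x * (η₂ x * (ι w : EuclideanSpace ℝ (Fin 3) → ℂ) x))
        = fun x => η₂ x * (η₁ x * (ι w : EuclideanSpace ℝ (Fin 3) → ℂ) x) := by
      funext x; ring
    rw [hswap]
    have hstep1 := eLpNorm_le_eLpNorm_top_mul_eLpNorm 2 η₂
        ((hη₁meas.aestronglyMeasurable).mul (hιw.mono_measure hμout_le)) (· * ·) 1
        (Eventually.of_forall fun x => le_of_eq (by simp [nnnorm_mul]))
    rw [ENNReal.coe_one, one_mul] at hstep1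
    calc
      eLpNorm (fun x => η₂ x * (η₁ x * (ι w : EuclideanSpace ℝ (Fin 3) → ℂ) x)) 2
          (volume.restrict (Ω \ Metric.ball (0 : EuclideanSpace ℝ (Fin 3)) (n : ℝ)))
          ≤ eLpNorm η₂ ⊤
              (volume.restrict (Ω \ Metric.ball (0 : EuclideanSpace ℝ (Fin 3)) (n : ℝ))) *
            eLpNorm (fun x => η₁ x * (ι w : EuclideanSpace ℝ (Fin 3) → ℂ) x) 2
              (volume.restrict Ω) :=
        hstep1.trans (mul_le_mul_right (eLpNorm_mono_measure _ hμout_le) _)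
      _ ≤ ENNReal.ofReal (ε / (8 * (C + 1))) * ENNReal.ofReal (C * 2) := by
        refine mul_le_mul' hout.le ((hbound w).trans (ENNReal.ofReal_le_ofReal ?_))
        nlinarith
      _ = ENNReal.ofReal ((ε / (8 * (C + 1))) * (C * 2)) := by
        rw [← ENNReal.ofReal_mul (by positivity)]
      _ ≤ ENNReal.ofReal (ε / 4) := by
        refine ENNReal.ofReal_le_ofReal ?_
        have hcalc : (ε / (8 * (C + 1))) * (C * 2) = ε * (C * 2) / (8 * (C + 1)) := by
          rw [div_mul_eq_mul_div]
        rw [hcalc, div_le_div_iff₀ (by positivity) (by norm_num)]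
        nlinarith
  -- combine
  have htotal : eLpNorm (fun x => η₁ x * (η₂ x * (ι w : EuclideanSpace ℝ (Fin 3) → ℂ) x)) 2
      (volume.restrict Ω) ≤ ENNReal.ofReal (ε / 2) := by
    calc
      eLpNorm (fun x => η₁ x * (η₂ x * (ι w : EuclideanSpace ℝ (Fin 3) → ℂ) x)) 2
          (volume.restrict Ω)
          = eLpNorm (fun x => η₁ x * (η₂ x * (ι w : EuclideanSpace ℝ (Fin 3) → ℂ) x)) 2
            (volume.restrict (Ω ∩ Metric.ball (0 : EuclideanSpace ℝ (Fin 3)) (n : ℝ))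
              + volume.restrict (Ω \ Metric.ball (0 : EuclideanSpace ℝ (Fin 3)) (n : ℝ))) := by
        rw [hμsplit]
      _ ≤ _ + _ := eLpNorm_two_add_measure_le _ _ _
      _ ≤ ENNReal.ofReal (ε / 4) + ENNReal.ofReal (ε / 4) := add_le_add hin hout2
      _ = ENNReal.ofReal (ε / 2) := by
        rw [← ENNReal.ofReal_add (by positivity) (by positivity)]; congr 1; ring
  have hfin := ENNReal.toReal_le_of_le_ofReal (by positivity) htotal
  linarith
end

section
/- (Lemma 6.1) Let 0 < r₁* < r₂*, let Ω_e ⊆ ℝ³ be a measurable subset of the open ball B_{r₂*} of radius r₂* centered at the origin, and let (r_n)_{n∈ℕ} ⊂ (r₁*, r₂*) be a monotonically increasing sequence with limit r₂*. Let η₁ : Ω_e → ℂ be measurable with η₁ essentially bounded on Ω_e ∩ B_{r_n} for every n ∈ ℕ. Let Y be a complex Hilbert space together with a linear map ι : Y → L²(Ω_e) such that (i) there is a constant C > 0 with ‖η₁·ι(u)‖_{L²(Ω_e)} ≤ C‖u‖_Y for all u ∈ Y, and (ii) for each n ∈ ℕ the restriction operator K_n : Y → L²(Ω_e ∩ B_{r_n}),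 u ↦ (ι u)|_{Ω_e ∩ B_{r_n}}, is a compact operator. Let η₂ ∈ L^∞(Ω_e) satisfy lim_{r→r₂*⁻} ‖η₂‖_{L^∞(Ω_e \ B_r)} = 0. Then the multiplication-and-embedding operator K : Y → L²(Ω_e), u ↦ η₁·η₂·ι(u), is compact. -/
open Filter MeasureTheory

set_option maxHeartbeats 1000000 in
/-- Lemma 6.1: let `0 < r₁* < r₂*`, `Ω_e ⊆ B_{r₂*}` measurable, `(rₙ) ⊂ (r₁*, r₂*)`
monotonically increasing with limit `r₂*`, `η₁` measurable and essentially bounded on each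
`Ω_e ∩ B_{rₙ}`, `Y` a Hilbert space with a linear map `ι : Y → L²(Ω_e)` such that
`‖η₁·ι(u)‖_{L²(Ω_e)} ≤ C‖u‖` and such that each restriction `Kₙ : Y → L²(Ω_e ∩ B_{rₙ})`
(given as a linear map agreeing a.e. with `ι`) is compact, and `η₂ ∈ L^∞(Ω_e)` with
`‖η₂‖_{L^∞(Ω_e \ B_r)} → 0` as `r → r₂*⁻`. Then the multiplication-and-embedding operator
`K : Y → L²(Ω_e)`, `u ↦ η₁·η₂·ι(u)`, is compact. -/
theorem stmt5
    (r₁ r₂ : ℝ) (hr₁ : 0 < r₁) (hr₁₂ : r₁ < r₂)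
    (Ω : Set (EuclideanSpace ℝ (Fin 3))) (hΩ : MeasurableSet Ω)
    (hΩsub : Ω ⊆ Metric.ball (0 : EuclideanSpace ℝ (Fin 3)) r₂)
    (rseq : ℕ → ℝ) (hrseq_mem : ∀ n, rseq n ∈ Set.Ioo r₁ r₂)
    (hrseq_mono : Monotone rseq) (hrseq_lim : Tendsto rseq atTop (nhds r₂))
    (η₁ η₂ : EuclideanSpace ℝ (Fin 3) → ℂ)
    (hη₁meas : Measurable η₁)
    (hη₁loc : ∀ n : ℕ,
      eLpNorm η₁ ⊤
        (volume.restrict (Ω ∩ Metric.ball (0 : EuclideanSpace ℝ (Fin 3)) (rseq n))) < ⊤)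
    (hη₂meas : Measurable η₂)
    (hη₂bdd : eLpNorm η₂ ⊤ (volume.restrict Ω) < ⊤)
    (hη₂lim : Tendsto
      (fun r : ℝ =>
        eLpNorm η₂ ⊤ (volume.restrict (Ω \ Metric.ball (0 : EuclideanSpace ℝ (Fin 3)) r)))
      (nhdsWithin r₂ (Set.Iio r₂)) (nhds 0))
    (Y : Type*) [NormedAddCommGroup Y] [InnerProductSpace ℂ Y] [CompleteSpace Y]
    (ι : Y →ₗ[ℂ] Lp ℂ 2 (volume.restrict Ω))
    (C : ℝ) (hC : 0 < C)
    (hbound : ∀ u : Y,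
      eLpNorm (fun x => η₁ x * (ι u : EuclideanSpace ℝ (Fin 3) → ℂ) x) 2 (volume.restrict Ω)
        ≤ ENNReal.ofReal (C * ‖u‖))
    (Kres : ∀ n : ℕ,
      Y →ₗ[ℂ] Lp ℂ 2
        (volume.restrict (Ω ∩ Metric.ball (0 : EuclideanSpace ℝ (Fin 3)) (rseq n))))
    (hKres : ∀ (n : ℕ) (u : Y),
      (Kres n u : EuclideanSpace ℝ (Fin 3) → ℂ)
        =ᵐ[volume.restrict (Ω ∩ Metric.ball (0 : EuclideanSpace ℝ (Fin 3)) (rseq n))]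
          (ι u : EuclideanSpace ℝ (Fin 3) → ℂ))
    (hKcomp : ∀ n : ℕ, IsCompactOperator (Kres n))
    (K : Y →ₗ[ℂ] Lp ℂ 2 (volume.restrict Ω))
    (hK : ∀ u : Y,
      (K u : EuclideanSpace ℝ (Fin 3) → ℂ) =ᵐ[volume.restrict Ω]
        fun x => η₁ x * (η₂ x * (ι u : EuclideanSpace ℝ (Fin 3) → ℂ) x)) :
    IsCompactOperator K := by
  classical
  set F : Y → EuclideanSpace ℝ (Fin 3) → ℂ :=
    fun u x => η₁ x * (η₂ x * (ι u : EuclideanSpace ℝ (Fin 3) → ℂ) x) with hFdef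
  have hFmeas : ∀ u, AEStronglyMeasurable (F u) (volume.restrict Ω) := by
    intro u
    exact hη₁meas.aestronglyMeasurable.mul
      (hη₂meas.aestronglyMeasurable.mul (Lp.aestronglyMeasurable (ι u)))
  have hF_eq : ∀ u, F u = η₂ • (fun x => η₁ x * (ι u : EuclideanSpace ℝ (Fin 3) → ℂ) x) := by
    intro u; funext x
    simp only [hFdef, Pi.smul_apply', smul_eq_mul]
    ring
  have hF_eq2 : ∀ u, F u = η₁ • (η₂ • ((ι u : EuclideanSpace ℝ (Fin 3) → ℂ))) := fun u => rfl
  have hres : ∀ n : ℕ, (volume.restrict Ω).restrict (Metric.ball (0 : EuclideanSpace ℝ (Fin 3)) (rseq n)) = volume.restrict (Ω ∩ Metric.ball (0 : EuclideanSpace ℝ (Fin 3)) (rseq n)) := by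
    intro n
    rw [Measure.restrict_restrict measurableSet_ball, Set.inter_comm]
  have hμn_le : ∀ n : ℕ, volume.restrict (Ω ∩ Metric.ball (0 : EuclideanSpace ℝ (Fin 3)) (rseq n)) ≤ (volume.restrict Ω) := fun n =>
    Measure.restrict_mono Set.inter_subset_left le_rfl
  have hdiff_le : ∀ n : ℕ, volume.restrict (Ω \ Metric.ball (0 : EuclideanSpace ℝ (Fin 3)) (rseq n)) ≤ (volume.restrict Ω) := fun n =>
    Measure.restrict_mono Set.diff_subset le_rfl
  have hFnorm : ∀ (u : Y) (ν : Measure (EuclideanSpace ℝ (Fin 3))), ν ≤ (volume.restrict Ω) →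
      eLpNorm (F u) 2 ν ≤ eLpNorm η₂ ⊤ ν * ENNReal.ofReal (C * ‖u‖) := by
    intro u ν hν
    rw [hF_eq u]
    refine (eLpNorm_smul_le_eLpNorm_top_mul_eLpNorm 2 ?_ η₂).trans ?_
    · exact ((hη₁meas.aestronglyMeasurable.mul (Lp.aestronglyMeasurable (ι u))).mono_measure hν)
    · exact mul_le_mul_right ((eLpNorm_mono_measure _ hν).trans (hbound u)) _
  have hη₂top : eLpNorm η₂ ⊤ (volume.restrict Ω) ≠ ⊤ := hη₂bdd.ne
  have hCu : ∀ u : Y, (0:ℝ) ≤ C * ‖u‖ := fun u => by positivity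
  have memFn : ∀ (n : ℕ) (u : Y), MemLp ((Metric.ball (0 : EuclideanSpace ℝ (Fin 3)) (rseq n)).indicator (F u)) 2 (volume.restrict Ω) := by
    intro n u
    refine ⟨(hFmeas u).indicator measurableSet_ball, ?_⟩
    rw [eLpNorm_indicator_eq_eLpNorm_restrict measurableSet_ball, hres n]
    have h1 : eLpNorm (F u) 2 (volume.restrict (Ω ∩ Metric.ball (0 : EuclideanSpace ℝ (Fin 3)) (rseq n))) ≤
        eLpNorm η₁ ⊤ (volume.restrict (Ω ∩ Metric.ball (0 : EuclideanSpace ℝ (Fin 3)) (rseq n))) *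
          (eLpNorm η₂ ⊤ (volume.restrict (Ω ∩ Metric.ball (0 : EuclideanSpace ℝ (Fin 3)) (rseq n))) *
            eLpNorm (ι u : EuclideanSpace ℝ (Fin 3) → ℂ) 2
              (volume.restrict (Ω ∩ Metric.ball (0 : EuclideanSpace ℝ (Fin 3)) (rseq n)))) := by
      rw [hF_eq2 u]
      refine (eLpNorm_smul_le_eLpNorm_top_mul_eLpNorm 2 ?_ η₁).trans ?_
      · exact (hη₂meas.aestronglyMeasurable.mul
          (Lp.aestronglyMeasurable (ι u))).mono_measure (hμn_le n)
      · exact mul_le_mul_right (eLpNorm_smul_le_eLpNorm_top_mul_eLpNorm 2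
          ((Lp.aestronglyMeasurable (ι u)).mono_measure (hμn_le n)) η₂) _
    refine h1.trans_lt (ENNReal.mul_lt_top (hη₁loc n) (ENNReal.mul_lt_top
      (lt_of_le_of_lt (eLpNorm_mono_measure _ (hμn_le n)) hη₂bdd)
      (lt_of_le_of_lt (eLpNorm_mono_measure _ (hμn_le n)) (Lp.eLpNorm_lt_top (ι u)))))
  have memF : ∀ u : Y, MemLp (F u) 2 (volume.restrict Ω) := by
    intro u
    exact ⟨hFmeas u, (hFnorm u (volume.restrict Ω) le_rfl).trans_lt
      (ENNReal.mul_lt_top hη₂bdd ENNReal.ofReal_lt_top)⟩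
  -- a.e. additivity / homogeneity of the truncations
  have hFadd : ∀ u v : Y, F (u + v) =ᵐ[(volume.restrict Ω)] F u + F v := by
    intro u v
    have h := Lp.coeFn_add (ι u) (ι v)
    rw [← map_add ι u v] at h
    filter_upwards [h] with x hx
    simp only [hFdef, Pi.add_apply, hx]
    ring
  have hFsmul : ∀ (c : ℂ) (u : Y), F (c • u) =ᵐ[(volume.restrict Ω)] c • F u := by
    intro c u
    have h := Lp.coeFn_smul c (ι u)
    rw [← map_smul ι c u] at h
    filter_upwards [h] with x hx
    simp only [hFdef, Pi.smul_apply, hx, smul_eq_mul]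
    ring
  have hFn_add : ∀ (n : ℕ) (u v : Y),
      (Metric.ball (0 : EuclideanSpace ℝ (Fin 3)) (rseq n)).indicator (F (u + v)) =ᵐ[(volume.restrict Ω)]
        (Metric.ball (0 : EuclideanSpace ℝ (Fin 3)) (rseq n)).indicator (F u) + (Metric.ball (0 : EuclideanSpace ℝ (Fin 3)) (rseq n)).indicator (F v) := by
    intro n u v
    filter_upwards [hFadd u v] with x hx
    by_cases hxB : x ∈ Metric.ball (0 : EuclideanSpace ℝ (Fin 3)) (rseq n)
    · simp [Set.indicator_of_mem hxB, hx]
    · simp [Set.indicator_of_notMem hxB]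
  have hFn_smul : ∀ (n : ℕ) (c : ℂ) (u : Y),
      (Metric.ball (0 : EuclideanSpace ℝ (Fin 3)) (rseq n)).indicator (F (c • u)) =ᵐ[(volume.restrict Ω)]
        c • (Metric.ball (0 : EuclideanSpace ℝ (Fin 3)) (rseq n)).indicator (F u) := by
    intro n c u
    filter_upwards [hFsmul c u] with x hx
    by_cases hxB : x ∈ Metric.ball (0 : EuclideanSpace ℝ (Fin 3)) (rseq n)
    · simp [Set.indicator_of_mem hxB, hx]
    · simp [Set.indicator_of_notMem hxB]
  -- the truncated operators, as linear maps
  set Klin : ℕ → (Y →ₗ[ℂ] Lp ℂ 2 (volume.restrict Ω)) := fun n =>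
    { toFun := fun u => (memFn n u).toLp _
      map_add' := fun u v => (MemLp.toLp_congr (memFn n (u + v)) ((memFn n u).add (memFn n v))
        (hFn_add n u v)).trans (MemLp.toLp_add (memFn n u) (memFn n v))
      map_smul' := fun c u => (MemLp.toLp_congr (memFn n (c • u)) ((memFn n u).const_smul c)
        (hFn_smul n c u)).trans (MemLp.toLp_const_smul c (memFn n u)) } with hKlindef
  -- generic toReal bound
  have htoReal : ∀ (a b : ENNReal) (u : Y), b ≠ ⊤ → a ≤ b * ENNReal.ofReal (C * ‖u‖) →
      a.toReal ≤ b.toReal * (C * ‖u‖) := by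
    intro a b u hb h
    have h2 := ENNReal.toReal_mono (ENNReal.mul_ne_top hb ENNReal.ofReal_ne_top) h
    rwa [ENNReal.toReal_mul, ENNReal.toReal_ofReal (hCu u)] at h2
  -- norm bounds
  have hKlin_norm : ∀ (n : ℕ) (u : Y),
      ‖Klin n u‖ ≤ (eLpNorm η₂ ⊤ (volume.restrict Ω)).toReal * C * ‖u‖ := by
    intro n u
    have h1 : ‖Klin n u‖ = (eLpNorm ((Metric.ball (0 : EuclideanSpace ℝ (Fin 3)) (rseq n)).indicator (F u)) 2 (volume.restrict Ω)).toReal :=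
      Lp.norm_toLp _ (memFn n u)
    rw [h1, mul_assoc]
    refine htoReal _ _ u hη₂top ?_
    rw [eLpNorm_indicator_eq_eLpNorm_restrict measurableSet_ball, hres n]
    exact (eLpNorm_mono_measure _ (hμn_le n)).trans
      ((hFnorm u (volume.restrict Ω) le_rfl).trans
        (mul_le_mul_left (eLpNorm_mono_measure _ le_rfl) _))
  have hK_norm : ∀ u : Y, ‖K u‖ ≤ (eLpNorm η₂ ⊤ (volume.restrict Ω)).toReal * C * ‖u‖ := by
    intro u
    rw [Lp.norm_def, mul_assoc]
    refine htoReal _ _ u hη₂top ?_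
    have h2 : eLpNorm ((K u : EuclideanSpace ℝ (Fin 3) → ℂ)) 2 (volume.restrict Ω) = eLpNorm (F u) 2 (volume.restrict Ω) :=
      eLpNorm_congr_ae (hK u)
    rw [h2]
    exact hFnorm u (volume.restrict Ω) le_rfl
  -- continuous versions
  set Kc : Y →L[ℂ] Lp ℂ 2 (volume.restrict Ω) :=
    K.mkContinuous ((eLpNorm η₂ ⊤ (volume.restrict Ω)).toReal * C) hK_norm with hKcdef
  set Kn : ℕ → (Y →L[ℂ] Lp ℂ 2 (volume.restrict Ω)) := fun n =>
    (Klin n).mkContinuous ((eLpNorm η₂ ⊤ (volume.restrict Ω)).toReal * C) (hKlin_norm n) with hKndef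
  -- each Kn is compact
  have hKncomp : ∀ n : ℕ, IsCompactOperator (Kn n) := by
    intro n
    have memG : ∀ v : Lp ℂ 2 (volume.restrict (Ω ∩ Metric.ball (0 : EuclideanSpace ℝ (Fin 3)) (rseq n))),
        MemLp ((Metric.ball (0 : EuclideanSpace ℝ (Fin 3)) (rseq n)).indicator
          (fun x => η₁ x * (η₂ x * (v : EuclideanSpace ℝ (Fin 3) → ℂ) x))) 2 (volume.restrict Ω) := by
      intro v
      constructor
      · refine (aestronglyMeasurable_indicator_iff measurableSet_ball).2 ?_
        rw [hres n]
        exact hη₁meas.aestronglyMeasurable.mul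
          (hη₂meas.aestronglyMeasurable.mul (Lp.aestronglyMeasurable v))
      · rw [eLpNorm_indicator_eq_eLpNorm_restrict measurableSet_ball, hres n]
        have h1 : eLpNorm (fun x => η₁ x * (η₂ x * (v : EuclideanSpace ℝ (Fin 3) → ℂ) x)) 2
            (volume.restrict (Ω ∩ Metric.ball (0 : EuclideanSpace ℝ (Fin 3)) (rseq n))) ≤
            eLpNorm η₁ ⊤ (volume.restrict (Ω ∩ Metric.ball (0 : EuclideanSpace ℝ (Fin 3)) (rseq n))) *
              (eLpNorm η₂ ⊤ (volume.restrict (Ω ∩ Metric.ball (0 : EuclideanSpace ℝ (Fin 3)) (rseq n))) *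
                eLpNorm (v : EuclideanSpace ℝ (Fin 3) → ℂ) 2
                  (volume.restrict (Ω ∩ Metric.ball (0 : EuclideanSpace ℝ (Fin 3)) (rseq n)))) := by
          refine (eLpNorm_smul_le_eLpNorm_top_mul_eLpNorm 2 ?_ η₁).trans ?_
          · exact hη₂meas.aestronglyMeasurable.mul (Lp.aestronglyMeasurable v)
          · exact mul_le_mul_right
              (eLpNorm_smul_le_eLpNorm_top_mul_eLpNorm 2 (Lp.aestronglyMeasurable v) η₂) _
        exact h1.trans_lt (ENNReal.mul_lt_top (hη₁loc n) (ENNReal.mul_lt_top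
          (lt_of_le_of_lt (eLpNorm_mono_measure _ (hμn_le n)) hη₂bdd)
          (Lp.eLpNorm_lt_top v)))
    set G : Lp ℂ 2 (volume.restrict (Ω ∩ Metric.ball (0 : EuclideanSpace ℝ (Fin 3)) (rseq n))) → Lp ℂ 2 (volume.restrict Ω) :=
      fun v => (memG v).toLp _ with hGdef
    -- G is Lipschitz
    have hGdiff : ∀ v w : Lp ℂ 2 (volume.restrict (Ω ∩ Metric.ball (0 : EuclideanSpace ℝ (Fin 3)) (rseq n))),
        dist (G v) (G w) ≤
          ((eLpNorm η₁ ⊤ (volume.restrict (Ω ∩ Metric.ball (0 : EuclideanSpace ℝ (Fin 3)) (rseq n)))).toReal *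
            (eLpNorm η₂ ⊤ (volume.restrict Ω)).toReal) * dist v w := by
      intro v w
      rw [dist_eq_norm, hGdef]
      have hsub : (memG v).toLp _ - (memG w).toLp _ = ((memG v).sub (memG w)).toLp _ :=
        (MemLp.toLp_sub _ _).symm
      rw [hsub, Lp.norm_toLp]
      have heq : ((Metric.ball (0 : EuclideanSpace ℝ (Fin 3)) (rseq n)).indicator
            (fun x => η₁ x * (η₂ x * (v : EuclideanSpace ℝ (Fin 3) → ℂ) x)) -
          (Metric.ball (0 : EuclideanSpace ℝ (Fin 3)) (rseq n)).indicator
            (fun x => η₁ x * (η₂ x * (w : EuclideanSpace ℝ (Fin 3) → ℂ) x))) =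
          (Metric.ball (0 : EuclideanSpace ℝ (Fin 3)) (rseq n)).indicator
            (fun x => η₁ x * (η₂ x *
              ((v : EuclideanSpace ℝ (Fin 3) → ℂ) x - (w : EuclideanSpace ℝ (Fin 3) → ℂ) x))) := by
        funext x
        by_cases hxB : x ∈ Metric.ball (0 : EuclideanSpace ℝ (Fin 3)) (rseq n)
        · simp only [Pi.sub_apply, Set.indicator_of_mem hxB]
          ring
        · simp [Set.indicator_of_notMem hxB]
      rw [heq, eLpNorm_indicator_eq_eLpNorm_restrict measurableSet_ball, hres n]
      have hd : eLpNorm (fun x => ((v : EuclideanSpace ℝ (Fin 3) → ℂ) x -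
            (w : EuclideanSpace ℝ (Fin 3) → ℂ) x)) 2 (volume.restrict (Ω ∩ Metric.ball (0 : EuclideanSpace ℝ (Fin 3)) (rseq n))) =
          ENNReal.ofReal (dist v w) := by
        have h3 : eLpNorm (fun x => ((v : EuclideanSpace ℝ (Fin 3) → ℂ) x -
              (w : EuclideanSpace ℝ (Fin 3) → ℂ) x)) 2 (volume.restrict (Ω ∩ Metric.ball (0 : EuclideanSpace ℝ (Fin 3)) (rseq n))) =
            eLpNorm ((v - w : Lp ℂ 2 (volume.restrict (Ω ∩ Metric.ball (0 : EuclideanSpace ℝ (Fin 3)) (rseq n)))) :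
              EuclideanSpace ℝ (Fin 3) → ℂ) 2 (volume.restrict (Ω ∩ Metric.ball (0 : EuclideanSpace ℝ (Fin 3)) (rseq n))) := by
          refine eLpNorm_congr_ae ?_
          filter_upwards [Lp.coeFn_sub v w] with x hx
          rw [hx, Pi.sub_apply]
        rw [h3, dist_eq_norm, Lp.norm_def,
          ENNReal.ofReal_toReal (Lp.eLpNorm_lt_top (v - w)).ne]
      have h1 : eLpNorm (fun x => η₁ x * (η₂ x *
            ((v : EuclideanSpace ℝ (Fin 3) → ℂ) x - (w : EuclideanSpace ℝ (Fin 3) → ℂ) x))) 2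
            (volume.restrict (Ω ∩ Metric.ball (0 : EuclideanSpace ℝ (Fin 3)) (rseq n))) ≤
          eLpNorm η₁ ⊤ (volume.restrict (Ω ∩ Metric.ball (0 : EuclideanSpace ℝ (Fin 3)) (rseq n))) *
            (eLpNorm η₂ ⊤ (volume.restrict Ω) * ENNReal.ofReal (dist v w)) := by
        refine (eLpNorm_smul_le_eLpNorm_top_mul_eLpNorm 2 ?_ η₁).trans ?_
        · exact hη₂meas.aestronglyMeasurable.mul
            ((Lp.aestronglyMeasurable v).sub (Lp.aestronglyMeasurable w))
        · refine mul_le_mul_right ?_ _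
          refine (eLpNorm_smul_le_eLpNorm_top_mul_eLpNorm 2 ?_ η₂).trans ?_
          · exact (Lp.aestronglyMeasurable v).sub (Lp.aestronglyMeasurable w)
          · rw [hd]
            exact mul_le_mul_left (eLpNorm_mono_measure _ (hμn_le n)) _
      have h2 := ENNReal.toReal_mono (ENNReal.mul_ne_top (hη₁loc n).ne
        (ENNReal.mul_ne_top hη₂top ENNReal.ofReal_ne_top)) h1
      rw [ENNReal.toReal_mul, ENNReal.toReal_mul,
        ENNReal.toReal_ofReal dist_nonneg] at h2
      calc _ ≤ _ := h2
      _ = _ := by ring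
    have hGcont : Continuous G := by
      set L : ℝ := (eLpNorm η₁ ⊤ (volume.restrict (Ω ∩ Metric.ball (0 : EuclideanSpace ℝ (Fin 3)) (rseq n)))).toReal *
          (eLpNorm η₂ ⊤ (volume.restrict Ω)).toReal with hLdef
      have hL0 : (0:ℝ) ≤ L := by positivity
      refine (LipschitzWith.of_dist_le_mul (K := L.toNNReal) fun v w => ?_).continuous
      rw [Real.coe_toNNReal _ hL0]
      exact hGdiff v w
    have hcompat : ∀ u : Y, G (Kres n u) = Klin n u := by
      intro u
      refine MemLp.toLp_congr (memG (Kres n u)) (memFn n u) ?_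
      have h0 := hKres n u
      have hfil : ae (volume.restrict (Ω ∩ Metric.ball (0 : EuclideanSpace ℝ (Fin 3)) (rseq n)))
          = ae ((volume.restrict Ω).restrict (Metric.ball (0 : EuclideanSpace ℝ (Fin 3)) (rseq n))) := by
        rw [hres n]
      have h1 := (ae_restrict_iff' measurableSet_ball).1 (hfil ▸ h0)
      filter_upwards [h1] with x hx
      by_cases hxB : x ∈ Metric.ball (0 : EuclideanSpace ℝ (Fin 3)) (rseq n)
      · simp only [Set.indicator_of_mem hxB, hFdef, hx hxB]
      · simp [Set.indicator_of_notMem hxB]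
    have hfun : ⇑(Kn n) = G ∘ ⇑(Kres n) := funext fun u => (hcompat u).symm
    rw [show (Kn n : Y → Lp ℂ 2 (volume.restrict Ω)) = G ∘ ⇑(Kres n) from hfun]
    exact (hKcomp n).continuous_comp hGcont
  -- the tail bound
  have hεfin : ∀ n : ℕ, eLpNorm η₂ ⊤ (volume.restrict (Ω \ Metric.ball (0 : EuclideanSpace ℝ (Fin 3)) (rseq n))) ≠ ⊤ := fun n =>
    ((eLpNorm_mono_measure _ (hdiff_le n)).trans_lt hη₂bdd).ne
  have hdiffres : ∀ n : ℕ, (volume.restrict Ω).restrict ((Metric.ball (0 : EuclideanSpace ℝ (Fin 3)) (rseq n))ᶜ) = volume.restrict (Ω \ Metric.ball (0 : EuclideanSpace ℝ (Fin 3)) (rseq n)) := by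
    intro n
    rw [Measure.restrict_restrict measurableSet_ball.compl, Set.inter_comm, ← Set.diff_eq]
  have hdiffnorm : ∀ (n : ℕ) (u : Y), ‖Kc u - Kn n u‖ ≤
      (eLpNorm η₂ ⊤ (volume.restrict (Ω \ Metric.ball (0 : EuclideanSpace ℝ (Fin 3)) (rseq n)))).toReal * (C * ‖u‖) := by
    intro n u
    have hco : ((Kc u - Kn n u : Lp ℂ 2 (volume.restrict Ω)) : EuclideanSpace ℝ (Fin 3) → ℂ) =ᵐ[(volume.restrict Ω)]
        ((Metric.ball (0 : EuclideanSpace ℝ (Fin 3)) (rseq n))ᶜ).indicator (F u) := by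
      have h1 := Lp.coeFn_sub (K u) (Klin n u)
      have h2 : ((Klin n u : Lp ℂ 2 (volume.restrict Ω)) : EuclideanSpace ℝ (Fin 3) → ℂ) =ᵐ[(volume.restrict Ω)]
          (Metric.ball (0 : EuclideanSpace ℝ (Fin 3)) (rseq n)).indicator (F u) := MemLp.coeFn_toLp (memFn n u)
      filter_upwards [h1, h2, hK u] with x hx1 hx2 hx3
      have : (Kc u - Kn n u : Lp ℂ 2 (volume.restrict Ω)) = K u - Klin n u := rfl
      rw [this, hx1]
      simp only [Pi.sub_apply, hx2, hx3]
      by_cases hxB : x ∈ Metric.ball (0 : EuclideanSpace ℝ (Fin 3)) (rseq n)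
      · simp [Set.indicator_of_mem hxB, Set.indicator_of_notMem (by simpa using hxB :
          x ∉ (Metric.ball (0 : EuclideanSpace ℝ (Fin 3)) (rseq n))ᶜ), hFdef]
      · simp [Set.indicator_of_notMem hxB, Set.indicator_of_mem (by simpa using hxB :
          x ∈ (Metric.ball (0 : EuclideanSpace ℝ (Fin 3)) (rseq n))ᶜ), hFdef]
    rw [Lp.norm_def]
    refine htoReal _ _ u (hεfin n) ?_
    rw [eLpNorm_congr_ae hco, eLpNorm_indicator_eq_eLpNorm_restrict measurableSet_ball.compl,
      hdiffres n]
    exact hFnorm u _ (hdiff_le n)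
  have hopnorm : ∀ n : ℕ, ‖Kn n - Kc‖ ≤
      (eLpNorm η₂ ⊤ (volume.restrict (Ω \ Metric.ball (0 : EuclideanSpace ℝ (Fin 3)) (rseq n)))).toReal * C := by
    intro n
    refine ContinuousLinearMap.opNorm_le_bound _
      (mul_nonneg ENNReal.toReal_nonneg hC.le) fun u => ?_
    rw [ContinuousLinearMap.sub_apply, norm_sub_rev]
    calc ‖Kc u - Kn n u‖ ≤ _ := hdiffnorm n u
    _ = _ := by ring
  -- convergence of the operators
  have hεlim : Tendsto (fun n : ℕ =>
      eLpNorm η₂ ⊤ (volume.restrict (Ω \ Metric.ball (0 : EuclideanSpace ℝ (Fin 3)) (rseq n)))) atTop (nhds 0) := by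
    exact hη₂lim.comp (tendsto_nhdsWithin_of_tendsto_nhds_of_eventually_within rseq hrseq_lim
      (Eventually.of_forall fun n => (hrseq_mem n).2))
  have hεlimR : Tendsto (fun n : ℕ =>
      (eLpNorm η₂ ⊤ (volume.restrict (Ω \ Metric.ball (0 : EuclideanSpace ℝ (Fin 3)) (rseq n)))).toReal * C) atTop (nhds 0) := by
    have h1 : Tendsto (fun n : ℕ =>
        (eLpNorm η₂ ⊤ (volume.restrict (Ω \ Metric.ball (0 : EuclideanSpace ℝ (Fin 3)) (rseq n)))).toReal) atTop (nhds 0) := by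
      have := (ENNReal.tendsto_toReal (by simp : (0:ENNReal) ≠ ⊤)).comp hεlim
      simpa [Function.comp_def] using this
    simpa using h1.mul_const C
  have htend : Tendsto Kn atTop (nhds Kc) := by
    rw [tendsto_iff_norm_sub_tendsto_zero]
    exact squeeze_zero (fun n => norm_nonneg _) hopnorm hεlimR
  have hc : IsCompactOperator Kc := isCompactOperator_of_tendsto htend
    (Eventually.of_forall hKncomp)
  exact hc
end

section
/- (Coefficient sector claim in the proof of Theorem 3.1, first case) Suppose Assumptions 2.1 and 3.1 hold, let τ ∈ (0, π/2) be such that arg( d(r)/d̃(r) ) ∈ [0, τ] for all r > r₁* (Lemma 3.1), and let ω ∈ ℂ \ {0} satisfy arg(−ω²d₀²) ∈ (−π, 0). Set τ₁ := min{ −2τ, −arg d̂(r₁*), arg(−ω²d₀²) }. Then τ₁ ∈ (−π, 0) and for every r ≥ 0: arg( d̃(r)²·|d̂(r)| / ( d(r)·d̂(r) ) ) ∈ [τ₁, 0] and arg( d(r)·|d̂(r)| / d̂(r) ) ∈ [τ₁, 0]. -/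
open Filter Set MeasureTheory

lemma aux_ne (a : ℝ) : (1 + Complex.I * (a:ℂ)) ≠ 0 := by
  intro h
  have := congrArg Complex.re h
  simp at this

lemma aux_re (a : ℝ) : (1 + Complex.I * (a:ℂ)).re = 1 := by simp
lemma aux_im (a : ℝ) : (1 + Complex.I * (a:ℂ)).im = a := by simp

lemma aux_abs_arg (a : ℝ) : |(1 + Complex.I * (a:ℂ)).arg| < Real.pi / 2 := by
  rw [Complex.abs_arg_lt_pi_div_two_iff]
  left; rw [aux_re]; norm_num

lemma aux_arg_abs_div (z : ℂ) (hz : z ≠ 0) (hπ : z.arg ≠ Real.pi) :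
    ((‖z‖ : ℂ) / z).arg = -z.arg := by
  rw [div_eq_mul_inv, Complex.arg_real_mul _ (norm_pos_iff.mpr hz), Complex.arg_inv, if_neg hπ]

/-- Coefficient sector claim in the proof of Theorem 3.1, first case.
Here `αh` plays the role of `α̂` (equal to the right limit `A` of `α` at `r₁*` on `[0, r₁*]`
and to `α` beyond `r₁*`), and `d̂ = dtil αh`. With
`τ₁ = min{−2τ, −arg d̂(r₁*), arg(−ω²d₀²)}` one has `τ₁ ∈ (−π, 0)` and, for every `r ≥ 0`,
`arg(d̃(r)²·|d̂(r)|/(d(r)·d̂(r))) ∈ [τ₁, 0]` and `arg(d(r)·|d̂(r)|/d̂(r)) ∈ [τ₁, 0]`. -/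
theorem stmt9 (r₁ : ℝ) (αt : ℝ → ℝ)
    (h21 : Assumption21 r₁ αt) (h31 : Assumption31 r₁ αt)
    (d₀ : ℂ)
    (hd₀ : Tendsto (fun r => dtil αt r / (‖dtil αt r‖ : ℂ)) atTop (nhds d₀))
    (τ : ℝ) (hτ : τ ∈ Set.Ioo 0 (Real.pi / 2))
    (hτarg : ∀ r, r₁ < r → (dfun r₁ αt r / dtil αt r).arg ∈ Set.Icc 0 τ)
    (A : ℝ) (hA : Tendsto (afun r₁ αt) (nhdsWithin r₁ (Set.Ioi r₁)) (nhds A))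
    (αh : ℝ → ℝ)
    (hαh₁ : ∀ r, 0 ≤ r → r ≤ r₁ → αh r = A)
    (hαh₂ : ∀ r, r₁ < r → αh r = afun r₁ αt r)
    (ω : ℂ) (hω : ω ≠ 0)
    (hargω : (-(ω ^ 2 * d₀ ^ 2)).arg ∈ Set.Ioo (-Real.pi) 0) :
    min (min (-(2 * τ)) (-(dtil αh r₁).arg)) (-(ω ^ 2 * d₀ ^ 2)).arg ∈ Set.Ioo (-Real.pi) 0 ∧
    ∀ r, 0 ≤ r →
      ((dtil αt r) ^ 2 * (‖dtil αh r‖ : ℂ) / (dfun r₁ αt r * dtil αh r)).arg ∈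
        Set.Icc (min (min (-(2 * τ)) (-(dtil αh r₁).arg)) (-(ω ^ 2 * d₀ ^ 2)).arg) 0 ∧
      (dfun r₁ αt r * (‖dtil αh r‖ : ℂ) / dtil αh r).arg ∈
        Set.Icc (min (min (-(2 * τ)) (-(dtil αh r₁).arg)) (-(ω ^ 2 * d₀ ^ 2)).arg) 0 := by
  obtain ⟨hτ0, hτπ⟩ := hτ
  have hπ := Real.pi_pos
  -- αt ≤ afun on (r₁, ∞)
  have hkey : ∀ r, r₁ < r → αt r ≤ afun r₁ αt r := by
    intro r hr
    have h1 := (hτarg r hr).1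
    rw [Complex.arg_nonneg_iff] at h1
    have hsq : 0 < Complex.normSq (dtil αt r) := by
      rw [dtil]; exact Complex.normSq_pos.mpr (aux_ne _)
    rw [Complex.div_im] at h1
    simp only [dtil, dfun, aux_re, aux_im] at h1 hsq
    rw [div_sub_div_same, div_nonneg_iff] at h1
    rcases h1 with ⟨h1, _⟩ | ⟨_, h2⟩
    · linarith
    · linarith
  have hA0 : 0 ≤ A := by
    refine ge_of_tendsto hA ?_
    filter_upwards [self_mem_nhdsWithin] with r hr
    exact le_trans (le_of_lt (h21.pos r hr)) (hkey r hr)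
  have hαhr₁ : dtil αh r₁ = 1 + Complex.I * (A:ℂ) := by
    rw [dtil, hαh₁ r₁ h21.r₁_pos.le le_rfl]
  have hargA_nonneg : 0 ≤ (1 + Complex.I * (A:ℂ)).arg := by
    rw [Complex.arg_nonneg_iff, aux_im]; exact hA0
  have hargA_lt := abs_lt.mp (aux_abs_arg A)
  set τ₁ := min (min (-(2 * τ)) (-(dtil αh r₁).arg)) (-(ω ^ 2 * d₀ ^ 2)).arg with hτ₁def
  have hτ₁mem : τ₁ ∈ Set.Ioo (-Real.pi) 0 := by
    constructor
    · refine lt_min (lt_min (by linarith) ?_) hargω.1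
      rw [hαhr₁]
      linarith [hargA_lt.2]
    · exact min_lt_of_right_lt hargω.2
  refine ⟨hτ₁mem, fun r hr => ?_⟩
  rcases le_or_gt r r₁ with hcase | hcase
  · -- r ≤ r₁
    have h0 : αt r = 0 := h21.eq_zero r hr hcase
    have hdt : dtil αt r = 1 := by rw [dtil, h0]; simp
    have hdf : dfun r₁ αt r = 1 := by
      rw [dfun, afun, if_neg (not_lt.mpr hcase)]; simp
    have hdh : dtil αh r = 1 + Complex.I * (A:ℂ) := by rw [dtil, hαh₁ r hr hcase]
    have hargne : (1 + Complex.I * (A:ℂ)).arg ≠ Real.pi := by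
      intro h; rw [h] at hargA_lt; linarith [hargA_lt.2]
    have hval : ((‖1 + Complex.I * (A:ℂ)‖ : ℂ) / (1 + Complex.I * (A:ℂ))).arg
        = -(1 + Complex.I * (A:ℂ)).arg := aux_arg_abs_div _ (aux_ne A) hargne
    have hτ₁le : τ₁ ≤ -(1 + Complex.I * (A:ℂ)).arg := by
      rw [hτ₁def, hαhr₁]
      exact le_trans (min_le_left _ _) (min_le_right _ _)
    constructor
    · rw [hdt, hdf, hdh, one_pow, one_mul, one_mul, hval]
      exact ⟨hτ₁le, neg_nonpos.mpr hargA_nonneg⟩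
    · rw [hdf, hdh, one_mul, hval]
      exact ⟨hτ₁le, neg_nonpos.mpr hargA_nonneg⟩
  · -- r > r₁
    have hdd : dtil αh r = dfun r₁ αt r := by
      rw [dtil, dfun, hαh₂ r hcase]
    have hdfne : dfun r₁ αt r ≠ 0 := by rw [dfun]; exact aux_ne _
    have hdtne : dtil αt r ≠ 0 := by rw [dtil]; exact aux_ne _
    have habs : (0:ℝ) < ‖dfun r₁ αt r‖ := norm_pos_iff.mpr hdfne
    have hq := hτarg r hcase
    have hqne : (dfun r₁ αt r / dtil αt r).arg ≠ Real.pi := by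
      intro h; rw [h] at hq; linarith [hq.2]
    have hz : (dtil αt r / dfun r₁ αt r).arg = -(dfun r₁ αt r / dtil αt r).arg := by
      have heq : dtil αt r / dfun r₁ αt r = (dfun r₁ αt r / dtil αt r)⁻¹ := by
        field_simp
      rw [heq, Complex.arg_inv, if_neg hqne]
    have hzne : dtil αt r / dfun r₁ αt r ≠ 0 := div_ne_zero hdtne hdfne
    constructor
    · have he1 : (dtil αt r) ^ 2 * (‖dtil αh r‖ : ℂ) / (dfun r₁ αt r * dtil αh r)
          = (‖dfun r₁ αt r‖ : ℂ) * (dtil αt r / dfun r₁ αt r) ^ 2 := by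
        rw [hdd]; field_simp
      have hzz : ((dtil αt r / dfun r₁ αt r) ^ 2).arg
          = 2 * (dtil αt r / dfun r₁ αt r).arg := by
        rw [sq, Complex.arg_mul hzne hzne, two_mul]
        rw [hz]
        constructor
        · linarith [hq.2]
        · linarith [hq.1]
      rw [he1, Complex.arg_real_mul _ habs, hzz, hz]
      constructor
      · have : τ₁ ≤ -(2 * τ) := by
          rw [hτ₁def]; exact le_trans (min_le_left _ _) (min_le_left _ _)
        linarith [hq.2]
      · linarith [hq.1]
    · have he2 : dfun r₁ αt r * (‖dtil αh r‖ : ℂ) / dtil αh r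
          = (‖dfun r₁ αt r‖ : ℂ) := by
        rw [hdd]; field_simp
      rw [he2, Complex.arg_ofReal_of_nonneg (norm_nonneg _)]
      exact ⟨hτ₁mem.2.le, le_rfl⟩
end

section
/- (Coefficient sector claim in the proof of Theorem 3.1, second case) Suppose Assumptions 2.1 and 3.1 hold, let τ ∈ (0, π/2) be such that arg( d(r)/d̃(r) ) ∈ [0, τ] for all r > r₁* (Lemma 3.1), and let ω ∈ ℂ \ {0} satisfy arg(−ω²d₀²) ∈ [0, π). Set τ₁ := max{ 2τ, arg d̂(r₁*), arg(−ω²d₀²) }. Then τ₁ ∈ (0, π) and for every r ≥ 0: arg( d̂(r)·|d̃(r)²| / ( d(r)·|d̂(r)| ) ) ∈ [0, τ₁] and arg( d(r)·d̂(r)·|d̃(r)²| / ( d̃(r)²·|d̂(r)| ) ) ∈ [0, τ₁]. -/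
open Filter Set MeasureTheory

private lemma one_add_I_mul_ne (a : ℝ) : (1 + Complex.I * (a : ℂ)) ≠ 0 := by
  intro h
  have h1 : (1 + Complex.I * (a : ℂ)).re = 1 := by simp
  rw [h] at h1
  simp at h1

private lemma arg_one_add_nonneg {a : ℝ} (ha : 0 ≤ a) :
    0 ≤ (1 + Complex.I * (a : ℂ)).arg :=
  Complex.arg_nonneg_iff.2 (by simp [ha])

private lemma arg_one_add_lt (a : ℝ) : (1 + Complex.I * (a : ℂ)).arg < Real.pi / 2 :=
  Complex.arg_lt_pi_div_two_iff.2 (Or.inl (by simp))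

private lemma arg_mul_abs_div (z w : ℂ) (s t : ℝ) (hs : 0 < s) (ht : 0 < t)
    (hw : w ≠ 0) : (z * (s : ℂ) / (w * (t : ℂ))).arg = (z / w).arg := by
  have h : z * (s : ℂ) / (w * (t : ℂ)) = ((s / t : ℝ) : ℂ) * (z / w) := by
    have ht' : (t : ℂ) ≠ 0 := Complex.ofReal_ne_zero.2 ht.ne'
    push_cast
    field_simp
  rw [h, Complex.arg_real_mul _ (div_pos hs ht)]

/-- Coefficient sector claim in the proof of Theorem 3.1, second case.
Here `αh` plays the role of `α̂` (equal to the right limit `A` of `α` at `r₁*` on `[0, r₁*]`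
and to `α` beyond `r₁*`), and `d̂ = dtil αh`. With
`τ₁ = max{2τ, arg d̂(r₁*), arg(−ω²d₀²)}` one has `τ₁ ∈ (0, π)` and, for every `r ≥ 0`,
`arg(d̂(r)·|d̃(r)²|/(d(r)·|d̂(r)|)) ∈ [0, τ₁]` and
`arg(d(r)·d̂(r)·|d̃(r)²|/(d̃(r)²·|d̂(r)|)) ∈ [0, τ₁]`. -/
theorem stmt10 (r₁ : ℝ) (αt : ℝ → ℝ)
    (h21 : Assumption21 r₁ αt) (h31 : Assumption31 r₁ αt)
    (d₀ : ℂ)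
    (hd₀ : Tendsto (fun r => dtil αt r / (‖dtil αt r‖ : ℂ)) atTop (nhds d₀))
    (τ : ℝ) (hτ : τ ∈ Set.Ioo 0 (Real.pi / 2))
    (hτarg : ∀ r, r₁ < r → (dfun r₁ αt r / dtil αt r).arg ∈ Set.Icc 0 τ)
    (A : ℝ) (hA : Tendsto (afun r₁ αt) (nhdsWithin r₁ (Set.Ioi r₁)) (nhds A))
    (αh : ℝ → ℝ)
    (hαh₁ : ∀ r, 0 ≤ r → r ≤ r₁ → αh r = A)
    (hαh₂ : ∀ r, r₁ < r → αh r = afun r₁ αt r)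
    (ω : ℂ) (hω : ω ≠ 0)
    (hargω : (-(ω ^ 2 * d₀ ^ 2)).arg ∈ Set.Ico 0 Real.pi) :
    max (max (2 * τ) (dtil αh r₁).arg) (-(ω ^ 2 * d₀ ^ 2)).arg ∈ Set.Ioo 0 Real.pi ∧
    ∀ r, 0 ≤ r →
      (dtil αh r * (‖(dtil αt r) ^ 2‖ : ℂ) /
          (dfun r₁ αt r * (‖dtil αh r‖ : ℂ))).arg ∈
        Set.Icc 0 (max (max (2 * τ) (dtil αh r₁).arg) (-(ω ^ 2 * d₀ ^ 2)).arg) ∧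
      (dfun r₁ αt r * dtil αh r * (‖(dtil αt r) ^ 2‖ : ℂ) /
          ((dtil αt r) ^ 2 * (‖dtil αh r‖ : ℂ))).arg ∈
        Set.Icc 0 (max (max (2 * τ) (dtil αh r₁).arg) (-(ω ^ 2 * d₀ ^ 2)).arg) := by
  obtain ⟨hτ0, hτπ⟩ := hτ
  have hπ := Real.pi_pos
  have hr₁0 := h21.r₁_pos
  -- derivative of αt is nonnegative beyond r₁
  have hderiv : ∀ r, r₁ < r → 0 ≤ deriv αt r := by
    intro r hr
    have hdiff : DifferentiableAt ℝ αt r :=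
      ((h21.smooth.contDiffAt (isOpen_Ioi.mem_nhds hr)).differentiableAt two_ne_zero)
    have hd := hdiff.hasDerivAt
    rw [hasDerivAt_iff_tendsto_slope] at hd
    have hd' : Tendsto (slope αt r) (nhdsWithin r (Set.Ioi r)) (nhds (deriv αt r)) :=
      hd.mono_left (nhdsWithin_mono _ fun x hx => Set.mem_compl_singleton_iff.2 (Set.mem_Ioi.1 hx).ne')
    refine ge_of_tendsto hd' ?_
    filter_upwards [self_mem_nhdsWithin] with x hx
    have hrx : r < x := hx
    have h0r : (0 : ℝ) ≤ r := (hr₁0.trans hr).le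
    have hmono := h21.mono (Set.mem_Ici.2 h0r) (Set.mem_Ici.2 (h0r.trans hrx.le)) hrx.le
    rw [slope_def_field]
    exact div_nonneg (by linarith) (by linarith)
  have hA0 : 0 ≤ A := by
    refine ge_of_tendsto hA ?_
    filter_upwards [self_mem_nhdsWithin] with r hr
    have hr' : r₁ < r := hr
    have h0 : 0 ≤ αt r := h21.nonneg r (hr₁0.trans hr').le
    have h1 : 0 ≤ deriv αt r := hderiv r hr'
    have h2 : (0 : ℝ) ≤ r := (hr₁0.trans hr').le
    have h3 := mul_nonneg h2 h1
    simp only [afun, if_pos hr']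
    linarith
  have hdhr₁ : dtil αh r₁ = 1 + Complex.I * (A : ℂ) := by
    rw [dtil, hαh₁ r₁ hr₁0.le le_rfl]
  have hargr₁0 : 0 ≤ (dtil αh r₁).arg := by
    rw [hdhr₁]; exact arg_one_add_nonneg hA0
  have hargr₁π : (dtil αh r₁).arg < Real.pi := by
    rw [hdhr₁]
    exact (arg_one_add_lt A).trans (half_lt_self hπ)
  have h2τπ : 2 * τ < Real.pi := by linarith
  have hτ₁pos : 0 < max (max (2 * τ) (dtil αh r₁).arg) (-(ω ^ 2 * d₀ ^ 2)).arg :=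
    lt_of_lt_of_le (by linarith) ((le_max_left (2 * τ) _).trans (le_max_left _ _))
  have h2τle : 2 * τ ≤ max (max (2 * τ) (dtil αh r₁).arg) (-(ω ^ 2 * d₀ ^ 2)).arg :=
    (le_max_left (2 * τ) _).trans (le_max_left _ _)
  have hr₁le : (dtil αh r₁).arg ≤ max (max (2 * τ) (dtil αh r₁).arg) (-(ω ^ 2 * d₀ ^ 2)).arg :=
    (le_max_right (2 * τ) _).trans (le_max_left _ _)
  refine ⟨⟨hτ₁pos, max_lt (max_lt h2τπ hargr₁π) hargω.2⟩, ?_⟩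
  intro r hr0
  have hsq_pos : 0 < ‖(dtil αt r) ^ 2‖ :=
    norm_pos_iff.mpr (pow_ne_zero 2 (one_add_I_mul_ne (αt r)))
  have hhpos : 0 < ‖dtil αh r‖ := norm_pos_iff.mpr (one_add_I_mul_ne (αh r))
  have hd_ne : dfun r₁ αt r ≠ 0 := one_add_I_mul_ne (afun r₁ αt r)
  have hdt_ne : dtil αt r ≠ 0 := one_add_I_mul_ne (αt r)
  have h1 : (dtil αh r * (‖(dtil αt r) ^ 2‖ : ℂ) /
      (dfun r₁ αt r * (‖dtil αh r‖ : ℂ))).arg = (dtil αh r / dfun r₁ αt r).arg :=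
    arg_mul_abs_div _ _ _ _ hsq_pos hhpos hd_ne
  have h2 : (dfun r₁ αt r * dtil αh r * (‖(dtil αt r) ^ 2‖ : ℂ) /
      ((dtil αt r) ^ 2 * (‖dtil αh r‖ : ℂ))).arg
      = (dfun r₁ αt r * dtil αh r / (dtil αt r) ^ 2).arg :=
    arg_mul_abs_div _ _ _ _ hsq_pos hhpos (pow_ne_zero 2 hdt_ne)
  rcases le_or_gt r r₁ with hle | hlt
  · have ht0 : αt r = 0 := h21.eq_zero r hr0 hle
    have ha0 : afun r₁ αt r = 0 := if_neg (not_lt.2 hle)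
    have hd1 : dfun r₁ αt r = 1 := by rw [dfun, ha0]; simp
    have hdt1 : dtil αt r = 1 := by rw [dtil, ht0]; simp
    have hdh : dtil αh r = dtil αh r₁ := by
      rw [dtil, dtil, hαh₁ r hr0 hle, hαh₁ r₁ hr₁0.le le_rfl]
    constructor
    · rw [h1, hd1, div_one, hdh]
      exact ⟨hargr₁0, hr₁le⟩
    · rw [h2, hd1, hdt1, one_mul, one_pow, div_one, hdh]
      exact ⟨hargr₁0, hr₁le⟩
  · have heq : dtil αh r = dfun r₁ αt r := by rw [dtil, dfun, hαh₂ r hlt]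
    obtain ⟨hz0, hzτ⟩ := hτarg r hlt
    constructor
    · rw [h1, heq, div_self hd_ne, Complex.arg_one]
      exact ⟨le_rfl, hτ₁pos.le⟩
    · have e : dfun r₁ αt r * dtil αh r / (dtil αt r) ^ 2
          = (dfun r₁ αt r / dtil αt r) * (dfun r₁ αt r / dtil αt r) := by
        rw [heq, div_mul_div_comm, sq]
      have hz_ne : dfun r₁ αt r / dtil αt r ≠ 0 := div_ne_zero hd_ne hdt_ne
      have hmem : (dfun r₁ αt r / dtil αt r).arg + (dfun r₁ αt r / dtil αt r).arg ∈
          Set.Ioc (-Real.pi) Real.pi := ⟨by linarith, by linarith⟩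
      rw [h2, e, Complex.arg_mul hz_ne hz_ne hmem]
      exact ⟨by linarith, by linarith [h2τle]⟩
end

section
/- (Coercivity estimate of the part a₁ in the proof of Theorem 3.1, first case, for smooth test functions) Suppose Assumption 2.1 holds, let Ω ⊆ ℝ³ be open, let ω ∈ ℂ \ {0} and d₀ ∈ ℂ with |d₀| = 1, and let τ₁ ∈ (−π, 0) be such that arg(−ω²d₀²) ∈ [τ₁, 0] and, for every r ≥ 0, arg( d̃(r)²·|d̂(r)| / ( d(r)·d̂(r) ) ) ∈ [τ₁, 0] and arg( d(r)·|d̂(r)| / d̂(r) ) ∈ [τ₁, 0]. For a continuously differentiable compactly supported u : Ω → ℂ set a₁(u,u) := ∫_Ω [ ( d̃(x)²·|d̂(x)| / ( d(x)·d̂(x) ) )·|x·∇u(x)|²/|x|² + ( d(x)·|d̂(x)| / d̂(x) )·( |∇u(x)|² − |x·∇u(x)|²/|x|² ) ] dx − ω²d₀²·∫_Ω |d̃(x)²·d(x)|·|u(x)|² dx, where radial weights are evaluated as f(x) := f(|x|). Then for every such u: Re( i·e^{−i(π+τ₁)/2}·a₁(u,u) ) ≥ cos(τ₁/2)·min{1,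 |ω|²}·‖u‖_X². -/
open Filter Set MeasureTheory

/-- Squared Euclidean norm of the gradient of `u` at `x`, `|∇u(x)|² = ∑ⱼ |∂ⱼu(x)|²`. -/
noncomputable def gradSq (u : EuclideanSpace ℝ (Fin 3) → ℂ) (x : EuclideanSpace ℝ (Fin 3)) : ℝ :=
  ∑ j : Fin 3, ‖fderiv ℝ u x (EuclideanSpace.single j 1)‖ ^ 2

/-- Squared modulus of the radial derivative, `|x·∇u(x)|²/|x|²`. -/
noncomputable def radSq (u : EuclideanSpace ℝ (Fin 3) → ℂ) (x : EuclideanSpace ℝ (Fin 3)) : ℝ :=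
  ‖fderiv ℝ u x x‖ ^ 2 / ‖x‖ ^ 2

/-- The squared weighted norm `‖u‖_X²` with radial weights evaluated at `|x|`. -/
noncomputable def XnormSq (r₁ : ℝ) (αt : ℝ → ℝ) (Ω : Set (EuclideanSpace ℝ (Fin 3)))
    (u : EuclideanSpace ℝ (Fin 3) → ℂ) : ℝ :=
  (∫ x in Ω, (‖(dtil αt ‖x‖) ^ 2 / dfun r₁ αt ‖x‖‖ * radSq u x
      + ‖dfun r₁ αt ‖x‖‖ * (gradSq u x - radSq u x))) +
  ∫ x in Ω, ‖(dtil αt ‖x‖) ^ 2 * dfun r₁ αt ‖x‖‖ * ‖u x‖ ^ 2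

/-- The sesquilinear part `a₁(u,u)` from the proof of Theorem 3.1 (first case), with
`d̂ = dtil αh`. -/
noncomputable def aOne (r₁ : ℝ) (αt αh : ℝ → ℝ) (Ω : Set (EuclideanSpace ℝ (Fin 3)))
    (ω d₀ : ℂ) (u : EuclideanSpace ℝ (Fin 3) → ℂ) : ℂ :=
  (∫ x in Ω,
      (((dtil αt ‖x‖) ^ 2 * (‖dtil αh ‖x‖‖ : ℂ) /
          (dfun r₁ αt ‖x‖ * dtil αh ‖x‖)) * ((radSq u x : ℝ) : ℂ)
        + (dfun r₁ αt ‖x‖ * (‖dtil αh ‖x‖‖ : ℂ) / dtil αh ‖x‖) *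
          ((gradSq u x - radSq u x : ℝ) : ℂ)))
  - ω ^ 2 * d₀ ^ 2 *
      ∫ x in Ω, ((‖(dtil αt ‖x‖) ^ 2 * dfun r₁ αt ‖x‖‖ : ℝ) : ℂ) *
        ((‖u x‖ ^ 2 : ℝ) : ℂ)


section Auxiliary

open Complex

lemma one_le_abs_one_add_I_mul (a : ℝ) : 1 ≤ ‖1 + Complex.I * a‖ := by
  have h : (1 + Complex.I * (a : ℂ)).re = 1 := by simp
  calc (1:ℝ) = |(1 + Complex.I * (a : ℂ)).re| := by rw [h, abs_one]
    _ ≤ _ := Complex.abs_re_le_norm _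

lemma abs_one_add_I_mul_le (a : ℝ) : ‖1 + Complex.I * a‖ ≤ 1 + |a| := by
  refine (norm_add_le _ _).trans ?_
  simp

lemma one_le_abs_dtil (α : ℝ → ℝ) (r : ℝ) : 1 ≤ ‖dtil α r‖ :=
  one_le_abs_one_add_I_mul _

lemma one_le_abs_dfun (r₁ : ℝ) (α : ℝ → ℝ) (r : ℝ) : 1 ≤ ‖dfun r₁ α r‖ :=
  one_le_abs_one_add_I_mul _

lemma abs_dtil_ne (α : ℝ → ℝ) (r : ℝ) : ‖dtil α r‖ ≠ 0 :=
  ne_of_gt (lt_of_lt_of_le one_pos (one_le_abs_dtil α r))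

lemma key_re {τ₁ : ℝ} (hπ : -Real.pi < τ₁) (hneg : τ₁ < 0) {z : ℂ}
    (hz : z.arg ∈ Set.Icc τ₁ 0) :
    Real.cos (τ₁ / 2) * ‖z‖ ≤ (Complex.exp ((-(τ₁ / 2) : ℝ) * Complex.I) * z).re := by
  have habs : |z.arg - τ₁ / 2| ≤ -(τ₁ / 2) := by
    rw [abs_le]; constructor
    · linarith [hz.1]
    · linarith [hz.2]
  have hcos : Real.cos (τ₁ / 2) ≤ Real.cos (z.arg - τ₁ / 2) := by
    rw [← Real.cos_abs (z.arg - τ₁ / 2), ← Real.cos_neg (τ₁ / 2)]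
    exact Real.cos_le_cos_of_nonneg_of_le_pi (abs_nonneg _) (by linarith [Real.pi_pos]) habs
  have hre : (Complex.exp ((-(τ₁ / 2) : ℝ) * Complex.I) * z).re
      = ‖z‖ * Real.cos (z.arg - τ₁ / 2) := by
    conv_lhs => rw [← Complex.norm_mul_exp_arg_mul_I z]
    rw [mul_comm (Complex.exp _) _, mul_assoc, ← Complex.exp_add]
    rw [show (↑z.arg * Complex.I + (↑(-(τ₁ / 2)) : ℂ) * Complex.I)
        = ((z.arg - τ₁ / 2 : ℝ) : ℂ) * Complex.I by push_cast; ring]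
    rw [Complex.re_ofReal_mul, Complex.exp_ofReal_mul_I_re]
  rw [hre]
  calc Real.cos (τ₁ / 2) * ‖z‖ ≤ Real.cos (z.arg - τ₁ / 2) * ‖z‖ :=
        mul_le_mul_of_nonneg_right hcos (norm_nonneg _)
    _ = ‖z‖ * Real.cos (z.arg - τ₁ / 2) := mul_comm _ _

lemma c_eq (τ₁ : ℝ) :
    Complex.I * Complex.exp (-Complex.I * (((Real.pi + τ₁) / 2 : ℝ) : ℂ)) =
      Complex.exp ((-(τ₁ / 2) : ℝ) * Complex.I) := by
  have h1 : -Complex.I * (((Real.pi + τ₁) / 2 : ℝ) : ℂ)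
      = ((-((Real.pi + τ₁) / 2) : ℝ) : ℂ) * Complex.I := by push_cast; ring
  rw [h1, Complex.exp_mul_I, Complex.exp_mul_I,
    ← Complex.ofReal_cos, ← Complex.ofReal_sin, ← Complex.ofReal_cos, ← Complex.ofReal_sin]
  have hs : Real.sin (-((Real.pi + τ₁) / 2)) = -Real.cos (τ₁ / 2) := by
    rw [Real.sin_neg, show (Real.pi + τ₁) / 2 = Real.pi / 2 + τ₁ / 2 by ring, Real.sin_add]
    simp
  have hc : Real.cos (-((Real.pi + τ₁) / 2)) = -Real.sin (τ₁ / 2) := by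
    rw [Real.cos_neg, show (Real.pi + τ₁) / 2 = Real.pi / 2 + τ₁ / 2 by ring, Real.cos_add]
    simp
  rw [hs, hc, Real.cos_neg, Real.sin_neg]
  push_cast
  ring_nf
  rw [Complex.I_sq]
  ring

lemma gradSq_nonneg (u : EuclideanSpace ℝ (Fin 3) → ℂ) (x : EuclideanSpace ℝ (Fin 3)) :
    0 ≤ gradSq u x := Finset.sum_nonneg fun j _ => sq_nonneg _

lemma radSq_nonneg (u : EuclideanSpace ℝ (Fin 3) → ℂ) (x : EuclideanSpace ℝ (Fin 3)) :
    0 ≤ radSq u x := div_nonneg (sq_nonneg _) (sq_nonneg _)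

lemma radSq_le_gradSq (u : EuclideanSpace ℝ (Fin 3) → ℂ) (x : EuclideanSpace ℝ (Fin 3)) :
    radSq u x ≤ gradSq u x := by
  have hgnn : 0 ≤ gradSq u x := gradSq_nonneg u x
  rcases eq_or_ne x 0 with hx | hx
  · have : radSq u x = ‖fderiv ℝ u x x‖ ^ 2 / ‖x‖ ^ 2 := rfl
    subst hx
    rw [this]
    simpa using hgnn
  · set L := fderiv ℝ u x with hL
    have hxsum : ∑ j, x j • EuclideanSpace.single j (1:ℝ) = x := by
      have := (EuclideanSpace.basisFun (Fin 3) ℝ).sum_repr x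
      simpa [EuclideanSpace.basisFun_apply, EuclideanSpace.basisFun_repr] using this
    have hLx : ‖L x‖
        ≤ ∑ j, |x j| * ‖L (EuclideanSpace.single j 1)‖ := by
      conv_lhs => rw [← hxsum]
      rw [map_sum]
      refine (norm_sum_le _ _).trans (le_of_eq ?_)
      refine Finset.sum_congr rfl fun j _ => ?_
      rw [L.map_smul, Complex.real_smul, norm_mul, Complex.norm_real, Real.norm_eq_abs]
    have hCS : (∑ j, |x j| * ‖L (EuclideanSpace.single j 1)‖) ^ 2
        ≤ (∑ j, |x j| ^ 2) * ∑ j, ‖L (EuclideanSpace.single j 1)‖ ^ 2 :=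
      Finset.sum_mul_sq_le_sq_mul_sq _ _ _
    have hnx : (∑ j, |x j| ^ 2) = ‖x‖ ^ 2 := by
      rw [EuclideanSpace.norm_eq,
        Real.sq_sqrt (Finset.sum_nonneg fun j _ => sq_nonneg _)]
      simp [Real.norm_eq_abs]
    have hx2 : (0:ℝ) < ‖x‖ ^ 2 := by have := norm_pos_iff.mpr hx; positivity
    have : radSq u x = ‖L x‖ ^ 2 / ‖x‖ ^ 2 := rfl
    rw [this, div_le_iff₀ hx2]
    calc ‖L x‖ ^ 2
        ≤ (∑ j, |x j| * ‖L (EuclideanSpace.single j 1)‖) ^ 2 :=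
          pow_le_pow_left₀ (norm_nonneg _) hLx 2
      _ ≤ (∑ j, |x j| ^ 2) * ∑ j, ‖L (EuclideanSpace.single j 1)‖ ^ 2 := hCS
      _ = gradSq u x * ‖x‖ ^ 2 := by rw [hnx]; exact mul_comm _ _

lemma abs_coef₁ (r₁ : ℝ) (αt αh : ℝ → ℝ) (r : ℝ) :
    ‖(dtil αt r) ^ 2 * (‖dtil αh r‖ : ℂ) /
        (dfun r₁ αt r * dtil αh r)‖
      = ‖(dtil αt r) ^ 2 / dfun r₁ αt r‖ := by
  have h0 : ‖dtil αh r‖ ≠ 0 := abs_dtil_ne αh r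
  rw [norm_div, norm_div, norm_mul, norm_mul, Complex.norm_real, Real.norm_eq_abs,
    _root_.abs_of_nonneg (norm_nonneg _)]
  rw [mul_div_mul_right _ _ h0]

lemma abs_coef₂ (r₁ : ℝ) (αt αh : ℝ → ℝ) (r : ℝ) :
    ‖dfun r₁ αt r * (‖dtil αh r‖ : ℂ) / dtil αh r‖
      = ‖dfun r₁ αt r‖ := by
  have h0 : ‖dtil αh r‖ ≠ 0 := abs_dtil_ne αh r
  rw [norm_div, norm_mul, Complex.norm_real, Real.norm_eq_abs, _root_.abs_of_nonneg (norm_nonneg _),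
    mul_div_assoc, div_self h0, mul_one]

end Auxiliary

/-- Coercivity estimate of the part `a₁` in the proof of Theorem 3.1, first case, for
smooth compactly supported test functions: if `τ₁ ∈ (−π, 0)`, `arg(−ω²d₀²) ∈ [τ₁, 0]`, and
all coefficient arguments lie in `[τ₁, 0]`, then
`Re(i·e^{−i(π+τ₁)/2}·a₁(u,u)) ≥ cos(τ₁/2)·min{1,|ω|²}·‖u‖_X²`. -/
theorem stmt11 (r₁ : ℝ) (αt : ℝ → ℝ) (h21 : Assumption21 r₁ αt)
    (Ω : Set (EuclideanSpace ℝ (Fin 3))) (hΩ : IsOpen Ω)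
    (ω d₀ : ℂ) (hω : ω ≠ 0) (hd₀ : ‖d₀‖ = 1)
    (A : ℝ) (hA : Filter.Tendsto (afun r₁ αt) (nhdsWithin r₁ (Set.Ioi r₁)) (nhds A))
    (αh : ℝ → ℝ)
    (hαh₁ : ∀ r, 0 ≤ r → r ≤ r₁ → αh r = A)
    (hαh₂ : ∀ r, r₁ < r → αh r = afun r₁ αt r)
    (τ₁ : ℝ) (hτ₁ : τ₁ ∈ Set.Ioo (-Real.pi) 0)
    (hargω : (-(ω ^ 2 * d₀ ^ 2)).arg ∈ Set.Icc τ₁ 0)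
    (hsec1 : ∀ r, 0 ≤ r →
      ((dtil αt r) ^ 2 * (‖dtil αh r‖ : ℂ) / (dfun r₁ αt r * dtil αh r)).arg ∈
        Set.Icc τ₁ 0)
    (hsec2 : ∀ r, 0 ≤ r →
      (dfun r₁ αt r * (‖dtil αh r‖ : ℂ) / dtil αh r).arg ∈ Set.Icc τ₁ 0) :
    ∀ u : EuclideanSpace ℝ (Fin 3) → ℂ, ContDiff ℝ 1 u → HasCompactSupport u →
      tsupport u ⊆ Ω →
      Real.cos (τ₁ / 2) * min 1 (‖ω‖ ^ 2) * XnormSq r₁ αt Ω u ≤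
        (Complex.I * Complex.exp (-Complex.I * (((Real.pi + τ₁) / 2 : ℝ) : ℂ)) *
          aOne r₁ αt αh Ω ω d₀ u).re := by
  classical
  intro u hu hcs hsuppΩ
  obtain ⟨hπ, hτneg⟩ := hτ₁
  have hcosφ : 0 ≤ Real.cos (τ₁ / 2) := by
    apply Real.cos_nonneg_of_mem_Icc
    constructor
    · linarith [Real.pi_pos]
    · linarith [Real.pi_pos]
  have hmin0 : 0 ≤ min 1 (‖ω‖ ^ 2) := le_min zero_le_one (sq_nonneg _)
  have hmin1 : min 1 (‖ω‖ ^ 2) ≤ 1 := min_le_left _ _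
  set cC : ℂ := Complex.I * Complex.exp (-Complex.I * (((Real.pi + τ₁) / 2 : ℝ) : ℂ)) with hcC
  have hcCeq : cC = Complex.exp ((-(τ₁ / 2) : ℝ) * Complex.I) := c_eq τ₁
  -- continuity facts
  have hαt_c : Continuous fun x : EuclideanSpace ℝ (Fin 3) => αt ‖x‖ :=
    h21.cont.comp_continuous continuous_norm fun x => norm_nonneg x
  have hdtilt_c : Continuous fun x : EuclideanSpace ℝ (Fin 3) => dtil αt ‖x‖ :=
    continuous_const.add (continuous_const.mul (Complex.continuous_ofReal.comp hαt_c))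
  have hderiv_cont : ContinuousOn (deriv αt) (Set.Ioi r₁) :=
    h21.smooth.continuousOn_deriv_of_isOpen isOpen_Ioi one_le_two
  have hafun_contOn : ContinuousOn (afun r₁ αt) (Set.Ioi r₁) := by
    have hbase : ContinuousOn (fun s => s * deriv αt s + αt s) (Set.Ioi r₁) :=
      (continuousOn_id.mul hderiv_cont).add
        (h21.cont.mono fun s hs => le_of_lt (lt_trans h21.r₁_pos hs))
    exact hbase.congr fun s hs => by simp [afun, Set.mem_Ioi.mp hs]
  have hαh_cont : ContinuousOn αh (Set.Ici 0) := by
    intro r hr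
    rcases lt_trichotomy r r₁ with h | h | h
    · have hmem : Set.Iio r₁ ∈ nhdsWithin r (Set.Ici 0) :=
        nhdsWithin_le_nhds (Iio_mem_nhds h)
      refine ContinuousWithinAt.congr_of_eventuallyEq
        (continuousWithinAt_const (b := A)) ?_ (hαh₁ r hr h.le)
      filter_upwards [hmem, self_mem_nhdsWithin] with s hs1 hs2
      exact hαh₁ s hs2 hs1.le
    · subst h
      have hr₁0 : (0:ℝ) ≤ r := hr
      have hval : αh r = A := hαh₁ r hr₁0 le_rfl
      unfold ContinuousWithinAt
      rw [hval]
      have hmono : nhdsWithin r (Set.Ici 0)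
          ≤ nhdsWithin r (Set.Icc 0 r) ⊔ nhdsWithin r (Set.Ioi r) := by
        rw [← nhdsWithin_union]
        apply nhdsWithin_mono
        intro s hs
        rcases le_or_gt s r with h' | h'
        · exact Or.inl ⟨hs, h'⟩
        · exact Or.inr h'
      refine Filter.Tendsto.mono_left ?_ hmono
      rw [Filter.tendsto_sup]
      constructor
      · refine Filter.Tendsto.congr' ?_ tendsto_const_nhds
        filter_upwards [self_mem_nhdsWithin] with s hs
        exact (hαh₁ s hs.1 hs.2).symm
      · refine Filter.Tendsto.congr' ?_ hA
        filter_upwards [self_mem_nhdsWithin] with s hs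
        exact (hαh₂ s hs).symm
    · have h1 : ContinuousAt (afun r₁ αt) r := hafun_contOn.continuousAt (Ioi_mem_nhds h)
      have h2 : ContinuousAt αh r := by
        apply h1.congr
        filter_upwards [Ioi_mem_nhds h] with s hs
        exact (hαh₂ s hs).symm
      exact h2.continuousWithinAt
  have hαhn_c : Continuous fun x : EuclideanSpace ℝ (Fin 3) => αh ‖x‖ :=
    hαh_cont.comp_continuous continuous_norm fun x => norm_nonneg x
  have hdtilh_c : Continuous fun x : EuclideanSpace ℝ (Fin 3) => dtil αh ‖x‖ :=
    continuous_const.add (continuous_const.mul (Complex.continuous_ofReal.comp hαhn_c))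
  have hafn : AEMeasurable (fun x : EuclideanSpace ℝ (Fin 3) => afun r₁ αt ‖x‖) := by
    have hU : IsOpen {x : EuclideanSpace ℝ (Fin 3) | r₁ < ‖x‖} :=
      isOpen_lt continuous_const continuous_norm
    have heq : (fun x : EuclideanSpace ℝ (Fin 3) => afun r₁ αt ‖x‖)
        = Set.indicator {x : EuclideanSpace ℝ (Fin 3) | r₁ < ‖x‖}
            (fun x => ‖x‖ * deriv αt ‖x‖ + αt ‖x‖) := by
      funext x
      by_cases h : r₁ < ‖x‖
      · simp [afun, h, Set.indicator_of_mem, Set.mem_setOf_eq]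
      · simp [afun, h, Set.indicator_of_notMem, Set.mem_setOf_eq]
    rw [heq, aemeasurable_indicator_iff hU.measurableSet]
    refine ContinuousOn.aemeasurable ?_ hU.measurableSet
    refine ContinuousOn.add ?_ hαt_c.continuousOn
    refine continuous_norm.continuousOn.mul ?_
    exact hderiv_cont.comp continuous_norm.continuousOn fun x hx => hx
  have hdfn_aem : AEMeasurable (fun x : EuclideanSpace ℝ (Fin 3) => dfun r₁ αt ‖x‖) :=
    aemeasurable_const.add
      (aemeasurable_const.mul (Complex.measurable_ofReal.comp_aemeasurable hafn))
  have hfd_c : Continuous fun x => fderiv ℝ u x := hu.continuous_fderiv one_ne_zero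
  have hnum_c : Continuous fun x : EuclideanSpace ℝ (Fin 3) =>
      ‖fderiv ℝ u x x‖ :=
    continuous_norm.comp (hfd_c.clm_apply continuous_id)
  have hrad_m : Measurable (radSq u) := by
    have hh : radSq u = fun x => ‖fderiv ℝ u x x‖ ^ 2 / ‖x‖ ^ 2 := rfl
    rw [hh]
    exact ((hnum_c.pow 2).measurable).div ((continuous_norm.pow 2).measurable)
  have hgrad_c : Continuous (gradSq u) := by
    have hh : gradSq u = fun x =>
        ∑ j : Fin 3, ‖fderiv ℝ u x (EuclideanSpace.single j 1)‖ ^ 2 := rfl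
    rw [hh]
    exact continuous_finset_sum _ fun j _ =>
      (continuous_norm.comp (hfd_c.clm_apply continuous_const)).pow 2
  set F : EuclideanSpace ℝ (Fin 3) → ℂ := fun x =>
    ((dtil αt ‖x‖) ^ 2 * (‖dtil αh ‖x‖‖ : ℂ) /
        (dfun r₁ αt ‖x‖ * dtil αh ‖x‖)) * ((radSq u x : ℝ) : ℂ)
      + (dfun r₁ αt ‖x‖ * (‖dtil αh ‖x‖‖ : ℂ) / dtil αh ‖x‖) *
        ((gradSq u x - radSq u x : ℝ) : ℂ) with hFdef
  have hF_aesm : AEStronglyMeasurable F volume := by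
    apply AEMeasurable.aestronglyMeasurable
    have hc1 : AEMeasurable (fun x : EuclideanSpace ℝ (Fin 3) =>
        (dtil αt ‖x‖) ^ 2 * (‖dtil αh ‖x‖‖ : ℂ) /
          (dfun r₁ αt ‖x‖ * dtil αh ‖x‖)) :=
      AEMeasurable.div
        (((hdtilt_c.pow 2).mul (Complex.continuous_ofReal.comp
          (continuous_norm.comp hdtilh_c))).aemeasurable)
        (hdfn_aem.mul hdtilh_c.aemeasurable)
    have hc2 : AEMeasurable (fun x : EuclideanSpace ℝ (Fin 3) =>
        dfun r₁ αt ‖x‖ * (‖dtil αh ‖x‖‖ : ℂ) / dtil αh ‖x‖) :=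
      AEMeasurable.div
        (hdfn_aem.mul (Complex.continuous_ofReal.comp
          (continuous_norm.comp hdtilh_c)).aemeasurable)
        hdtilh_c.aemeasurable
    exact (hc1.mul (Complex.measurable_ofReal.comp_aemeasurable hrad_m.aemeasurable)).add
      (hc2.mul (Complex.measurable_ofReal.comp_aemeasurable
        ((hgrad_c.measurable.sub hrad_m).aemeasurable)))
  have hK'cpt : IsCompact (tsupport (fderiv ℝ u)) := (hcs.fderiv (𝕜 := ℝ))
  have hF0 : ∀ x, x ∉ tsupport (fderiv ℝ u) → F x = 0 := by
    intro x hx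
    have hfd0 : fderiv ℝ u x = 0 := image_eq_zero_of_notMem_tsupport hx
    have hr0 : radSq u x = 0 := by
      have hh : radSq u x = ‖fderiv ℝ u x x‖ ^ 2 / ‖x‖ ^ 2 := rfl
      rw [hh, hfd0]; simp
    have hg0 : gradSq u x = 0 := by
      have hh : gradSq u x = ∑ j : Fin 3,
          ‖fderiv ℝ u x (EuclideanSpace.single j 1)‖ ^ 2 := rfl
      rw [hh, hfd0]; simp
    simp [hFdef, hr0, hg0]
  obtain ⟨RR, hRR⟩ := hK'cpt.isBounded.subset_closedBall 0
  obtain ⟨Bt, hBt⟩ := isCompact_Icc.exists_bound_of_continuousOn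
    (h21.cont.mono (Set.Icc_subset_Ici_self (b := (0:ℝ)) (a := RR)))
  obtain ⟨Bh, hBh⟩ := isCompact_Icc.exists_bound_of_continuousOn
    (hαh_cont.mono (Set.Icc_subset_Ici_self (b := (0:ℝ)) (a := RR)))
  obtain ⟨Mg0, hMg0⟩ := hK'cpt.exists_bound_of_continuousOn hgrad_c.continuousOn
  have hgrad_le : ∀ x ∈ tsupport (fderiv ℝ u), gradSq u x ≤ max Mg0 0 := by
    intro x hx
    refine le_trans (le_abs_self _) (le_trans ?_ (le_max_left _ _))
    rw [← Real.norm_eq_abs]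
    exact hMg0 x hx
  have hafun_le : ∀ r : ℝ, 0 ≤ r → r ≤ RR → |afun r₁ αt r| ≤ max Bh 0 := by
    intro r h0 hRRr
    by_cases h : r₁ < r
    · have h1 : αh r = afun r₁ αt r := hαh₂ r h
      rw [← h1]
      refine le_trans ?_ (le_max_left _ _)
      rw [← Real.norm_eq_abs]
      exact hBh r ⟨h0, hRRr⟩
    · have h1 : afun r₁ αt r = 0 := if_neg h
      rw [h1]
      simp
  have hFbound : ∀ x ∈ tsupport (fderiv ℝ u),
      ‖F x‖ ≤ (1 + max Bt 0) ^ 2 * max Mg0 0 + (1 + max Bh 0) * max Mg0 0 := by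
    intro x hx
    have hr0 : (0:ℝ) ≤ ‖x‖ := norm_nonneg x
    have hrRR : ‖x‖ ≤ RR := by
      have := hRR hx
      simpa [Metric.mem_closedBall] using this
    have ht0 : 0 ≤ radSq u x := radSq_nonneg u x
    have hs0 : 0 ≤ gradSq u x - radSq u x := sub_nonneg.2 (radSq_le_gradSq u x)
    have htM : radSq u x ≤ max Mg0 0 := le_trans (radSq_le_gradSq u x) (hgrad_le x hx)
    have hsM : gradSq u x - radSq u x ≤ max Mg0 0 := by linarith [hgrad_le x hx]
    have hc1b : ‖(dtil αt ‖x‖) ^ 2 * (‖dtil αh ‖x‖‖ : ℂ) /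
        (dfun r₁ αt ‖x‖ * dtil αh ‖x‖)‖ ≤ (1 + max Bt 0) ^ 2 := by
      rw [abs_coef₁, norm_div, norm_pow]
      have h1 : ‖dtil αt ‖x‖‖ ≤ 1 + max Bt 0 := by
        refine (abs_one_add_I_mul_le (αt ‖x‖)).trans ?_
        have h2 : |αt ‖x‖| ≤ max Bt 0 := by
          refine le_trans ?_ (le_max_left _ _)
          rw [← Real.norm_eq_abs]
          exact hBt ‖x‖ ⟨hr0, hrRR⟩
        linarith
      refine le_trans (div_le_self (by positivity) (one_le_abs_dfun r₁ αt ‖x‖)) ?_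
      exact pow_le_pow_left₀ (norm_nonneg _) h1 2
    have hc2b : ‖dfun r₁ αt ‖x‖ * (‖dtil αh ‖x‖‖ : ℂ) /
        dtil αh ‖x‖‖ ≤ 1 + max Bh 0 := by
      rw [abs_coef₂]
      refine (abs_one_add_I_mul_le (afun r₁ αt ‖x‖)).trans ?_
      linarith [hafun_le ‖x‖ hr0 hrRR]
    have hnorm : ‖F x‖ ≤ ‖(dtil αt ‖x‖) ^ 2 * (‖dtil αh ‖x‖‖ : ℂ) /
          (dfun r₁ αt ‖x‖ * dtil αh ‖x‖)‖ * radSq u x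
        + ‖dfun r₁ αt ‖x‖ * (‖dtil αh ‖x‖‖ : ℂ) / dtil αh ‖x‖‖ *
          (gradSq u x - radSq u x) := by
      rw [hFdef]
      refine (norm_add_le _ _).trans (le_of_eq ?_)
      rw [norm_mul, norm_mul, Complex.norm_real, Real.norm_eq_abs, Complex.norm_real, Real.norm_eq_abs,
        _root_.abs_of_nonneg ht0, _root_.abs_of_nonneg hs0]
    refine hnorm.trans ?_
    have hMg0' : (0:ℝ) ≤ max Mg0 0 := le_max_right _ _
    refine add_le_add ?_ ?_
    · exact mul_le_mul hc1b htM ht0 (by positivity)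
    · exact mul_le_mul hc2b hsM hs0 (by positivity)
  have hsuppF : Function.support F ⊆ tsupport (fderiv ℝ u) := by
    intro x hx
    by_contra h
    exact hx (hF0 x h)
  have hFint : Integrable F := by
    rw [← integrableOn_iff_integrable_of_support_subset hsuppF]
    refine Measure.integrableOn_of_bounded (M := (1 + max Bt 0) ^ 2 * max Mg0 0 + (1 + max Bh 0) * max Mg0 0) hK'cpt.measure_lt_top.ne hF_aesm ?_
    rw [ae_restrict_iff' (isClosed_tsupport _).measurableSet]
    exact ae_of_all _ hFbound
  have hFΩ : IntegrableOn F Ω := hFint.integrableOn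
  set S : ℝ := ∫ x in Ω, (‖(dtil αt ‖x‖) ^ 2 / dfun r₁ αt ‖x‖‖ * radSq u x
      + ‖dfun r₁ αt ‖x‖‖ * (gradSq u x - radSq u x)) with hSdef
  set J : ℝ := ∫ x in Ω, ‖(dtil αt ‖x‖) ^ 2 * dfun r₁ αt ‖x‖‖
      * ‖u x‖ ^ 2 with hJdef
  have hXeq : XnormSq r₁ αt Ω u = S + J := rfl
  have hJ0 : (0:ℝ) ≤ J := by
    rw [hJdef]
    exact integral_nonneg fun x => mul_nonneg (norm_nonneg _) (sq_nonneg _)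
  have hI₂ : (∫ x in Ω, ((‖(dtil αt ‖x‖) ^ 2 * dfun r₁ αt ‖x‖‖ : ℝ) : ℂ)
      * ((‖u x‖ ^ 2 : ℝ) : ℂ)) = ((J : ℝ) : ℂ) := by
    rw [hJdef]
    simp only [← Complex.ofReal_mul]
    exact integral_ofReal
  have haOne : aOne r₁ αt αh Ω ω d₀ u = (∫ x in Ω, F x) - ω ^ 2 * d₀ ^ 2 * ((J : ℝ) : ℂ) := by
    rw [show aOne r₁ αt αh Ω ω d₀ u = (∫ x in Ω, F x) - ω ^ 2 * d₀ ^ 2 *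
      ∫ x in Ω, ((‖(dtil αt ‖x‖) ^ 2 * dfun r₁ αt ‖x‖‖ : ℝ) : ℂ)
        * ((‖u x‖ ^ 2 : ℝ) : ℂ) from rfl, hI₂]
  rw [hXeq, haOne]
  have hre : ∀ (z : ℂ) (a : ℝ), (z * (a : ℂ)).re = z.re * a := fun z a => by
    simp [Complex.mul_re]
  have hsplit : cC * ((∫ x in Ω, F x) - ω ^ 2 * d₀ ^ 2 * ((J : ℝ) : ℂ))
      = cC * (∫ x in Ω, F x) + (cC * -(ω ^ 2 * d₀ ^ 2)) * ((J : ℝ) : ℂ) := by ring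
  rw [hsplit, Complex.add_re, hre]
  have hreI : (cC * ∫ x in Ω, F x).re = ∫ x in Ω, (cC * F x).re := by
    rw [← integral_const_mul]
    have h := integral_re (μ := volume.restrict Ω) (f := fun x => cC * F x)
      (hFΩ.const_mul cC)
    simpa using h.symm
  rw [hreI]
  have hzB : Real.cos (τ₁ / 2) * min 1 (‖ω‖ ^ 2)
      ≤ (cC * -(ω ^ 2 * d₀ ^ 2)).re := by
    have hk := key_re hπ hτneg hargω
    rw [← hcCeq] at hk
    have habs : ‖-(ω ^ 2 * d₀ ^ 2)‖ = ‖ω‖ ^ 2 := by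
      rw [norm_neg, norm_mul, norm_pow, norm_pow, hd₀]
      ring
    rw [habs] at hk
    calc Real.cos (τ₁ / 2) * min 1 (‖ω‖ ^ 2)
        ≤ Real.cos (τ₁ / 2) * ‖ω‖ ^ 2 :=
          mul_le_mul_of_nonneg_left (min_le_right _ _) hcosφ
      _ ≤ _ := hk
  have hptA : ∀ x : EuclideanSpace ℝ (Fin 3),
      Real.cos (τ₁ / 2) * min 1 (‖ω‖ ^ 2) *
        (‖(dtil αt ‖x‖) ^ 2 / dfun r₁ αt ‖x‖‖ * radSq u x
          + ‖dfun r₁ αt ‖x‖‖ * (gradSq u x - radSq u x))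
        ≤ (cC * F x).re := by
    intro x
    have ht0 : 0 ≤ radSq u x := radSq_nonneg u x
    have hs0 : 0 ≤ gradSq u x - radSq u x := sub_nonneg.2 (radSq_le_gradSq u x)
    have h₁ := key_re hπ hτneg (hsec1 ‖x‖ (norm_nonneg x))
    have h₂ := key_re hπ hτneg (hsec2 ‖x‖ (norm_nonneg x))
    rw [← hcCeq] at h₁ h₂
    rw [abs_coef₁] at h₁
    rw [abs_coef₂] at h₂
    have hFx : (cC * F x).re
        = (cC * ((dtil αt ‖x‖) ^ 2 * (‖dtil αh ‖x‖‖ : ℂ) /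
            (dfun r₁ αt ‖x‖ * dtil αh ‖x‖))).re * radSq u x
          + (cC * (dfun r₁ αt ‖x‖ * (‖dtil αh ‖x‖‖ : ℂ) / dtil αh ‖x‖)).re *
            (gradSq u x - radSq u x) := by
      have hexp : cC * F x
          = (cC * ((dtil αt ‖x‖) ^ 2 * (‖dtil αh ‖x‖‖ : ℂ) /
              (dfun r₁ αt ‖x‖ * dtil αh ‖x‖))) * ((radSq u x : ℝ) : ℂ)
            + (cC * (dfun r₁ αt ‖x‖ * (‖dtil αh ‖x‖‖ : ℂ) / dtil αh ‖x‖)) *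
              ((gradSq u x - radSq u x : ℝ) : ℂ) := by
        simp only [hFdef]
        ring
      rw [hexp, Complex.add_re, hre, hre]
    rw [hFx]
    have hw₁ : 0 ≤ ‖(dtil αt ‖x‖) ^ 2 / dfun r₁ αt ‖x‖‖ := norm_nonneg _
    have hw₂ : 0 ≤ ‖dfun r₁ αt ‖x‖‖ := norm_nonneg _
    nlinarith [mul_le_mul_of_nonneg_right h₁ ht0, mul_le_mul_of_nonneg_right h₂ hs0,
      mul_nonneg hw₁ ht0, mul_nonneg hw₂ hs0,
      mul_nonneg (mul_nonneg hcosφ hw₁) ht0, mul_nonneg (mul_nonneg hcosφ hw₂) hs0]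
  have hSle : Real.cos (τ₁ / 2) * min 1 (‖ω‖ ^ 2) * S
      ≤ ∫ x in Ω, (cC * F x).re := by
    rw [hSdef, ← integral_const_mul]
    refine integral_mono_of_nonneg (ae_of_all _ fun x => ?_) ?_ (ae_of_all _ fun x => hptA x)
    · exact mul_nonneg (mul_nonneg hcosφ hmin0)
        (add_nonneg (mul_nonneg (norm_nonneg _) (radSq_nonneg u x))
          (mul_nonneg (norm_nonneg _) (sub_nonneg.2 (radSq_le_gradSq u x))))
    · have h := (hFΩ.const_mul cC).re
      simpa using h
  have hJle : Real.cos (τ₁ / 2) * min 1 (‖ω‖ ^ 2) * J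
      ≤ (cC * -(ω ^ 2 * d₀ ^ 2)).re * J := mul_le_mul_of_nonneg_right hzB hJ0
  rw [mul_add]
  exact add_le_add hSle hJle
end
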